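/- arXiv:2212.01301 — 6 statements merged into one kernel-verified Lean document; each statement's English description precedes it below -/
import Mathlib

section
/- For every k ≥ 1 and all semilinear sets Q₁, Q₂ ⊆ ℕ^k, the intersection Q₁ ∩ Q₂ is a semilinear subset of ℕ^k. -/
/-- A set `Q ⊆ ℕ^α` is linear if it has a constant vector `v₀` and finitely many
period vectors `v₁, …, v_l` with `Q = {v₀ + i₁v₁ + ⋯ + i_l v_l}`. -/
def IsLinearSet' {α : Type*} (Q : Set (α → ℕ)) : Prop :=
  ∃ (v₀ : α → ℕ) (l : ℕ) (v : Fin l → α → ℕ),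
    Q = { x | ∃ c : Fin l → ℕ, x = v₀ + ∑ j, c j • v j }

/-- A set is semilinear if it is a finite union of linear sets. -/
def IsSemilinearSet' {α : Type*} (Q : Set (α → ℕ)) : Prop :=
  ∃ (n : ℕ) (Qs : Fin n → Set (α → ℕ)),
    (∀ i, IsLinearSet' (Qs i)) ∧ Q = ⋃ i, Qs i

open Classical in
/-- The Parikh image of a word: `parikhWord w a = |w|_a`. -/
noncomputable def parikhWord {σ : Type*} (w : List σ) : σ → ℕ :=
  fun a => w.count a

/-- A language is semilinear if its Parikh image is a semilinear set. -/
def IsSemilinearLanguage {σ : Type*} (L : Set (List σ)) : Prop :=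
  IsSemilinearSet' (parikhWord '' L)

namespace SLAux

variable {α : Type*}

/-- Linear combination of period vectors, as an `AddMonoidHom`. -/
def comb {l : ℕ} (v : Fin l → α → ℕ) : (Fin l → ℕ) →+ (α → ℕ) where
  toFun c := ∑ j, c j • v j
  map_zero' := by simp
  map_add' c d := by
    simp only [Pi.add_apply, add_smul]
    rw [Finset.sum_add_distrib]

variable {l m : ℕ}

/-- Solution pairs of the inhomogeneous system. -/
def Sol (v₀ : α → ℕ) (v : Fin l → α → ℕ) (w₀ : α → ℕ) (w : Fin m → α → ℕ) :
    Set ((Fin l → ℕ) × (Fin m → ℕ)) :=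
  {p | v₀ + comb v p.1 = w₀ + comb w p.2}

/-- Nonzero homogeneous solutions. -/
def Homo (v : Fin l → α → ℕ) (w : Fin m → α → ℕ) :
    Set ((Fin l → ℕ) × (Fin m → ℕ)) :=
  {p | p ≠ 0 ∧ comb v p.1 = comb w p.2}

def μ (p : (Fin l → ℕ) × (Fin m → ℕ)) : ℕ := ∑ j, p.1 j + ∑ j, p.2 j

theorem exists_add_of_le' {p q : (Fin l → ℕ) × (Fin m → ℕ)} (h : p ≤ q) :
    ∃ r, q = p + r := by
  refine ⟨(q.1 - p.1, q.2 - p.2), ?_⟩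
  obtain ⟨h1, h2⟩ := Prod.le_def.mp h
  refine Prod.ext ?_ ?_ <;> funext j
  · exact (Nat.add_sub_cancel' (h1 j)).symm
  · exact (Nat.add_sub_cancel' (h2 j)).symm

theorem le_add_right' (p r : (Fin l → ℕ) × (Fin m → ℕ)) : r ≤ p + r := by
  refine Prod.le_def.mpr ⟨fun j => ?_, fun j => ?_⟩ <;>
    simp [Pi.add_apply]

theorem μ_add (p q : (Fin l → ℕ) × (Fin m → ℕ)) : μ (p + q) = μ p + μ q := by
  simp only [μ, Prod.fst_add, Prod.snd_add, Pi.add_apply, Finset.sum_add_distrib]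
  ring

theorem μ_pos {p : (Fin l → ℕ) × (Fin m → ℕ)} (h : p ≠ 0) : 0 < μ p := by
  rcases Nat.eq_zero_or_pos (μ p) with h0 | h0
  · exfalso
    apply h
    simp only [μ] at h0
    have h1 : ∑ j, p.1 j = 0 ∧ ∑ j, p.2 j = 0 := by
      constructor <;> omega
    refine Prod.ext ?_ ?_ <;> funext j
    · exact (Finset.sum_eq_zero_iff.mp h1.1) j (Finset.mem_univ j)
    · exact (Finset.sum_eq_zero_iff.mp h1.2) j (Finset.mem_univ j)
  · exact h0

end SLAux

namespace SLAux2
open SLAux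

variable {α : Type*} {l m : ℕ} {v₀ : α → ℕ} {v : Fin l → α → ℕ} {w₀ : α → ℕ} {w : Fin m → α → ℕ}

/-- Subtracting a homogeneous solution from a solution yields a solution. -/
theorem sub_mem_sol {x h r : (Fin l → ℕ) × (Fin m → ℕ)}
    (hx : x ∈ Sol v₀ v w₀ w) (hh : comb v h.1 = comb w h.2) (hr : x = h + r) :
    r ∈ Sol v₀ v w₀ w := by
  simp only [Sol, Set.mem_setOf_eq] at hx ⊢
  subst hr
  simp only [Prod.fst_add, Prod.snd_add, map_add] at hx
  funext a
  have h1 := congrFun hx a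
  have h2 := congrFun hh a
  simp only [Pi.add_apply] at h1 h2 ⊢
  omega

/-- The difference of two comparable solutions is homogeneous. -/
theorem diff_homo {a b r : (Fin l → ℕ) × (Fin m → ℕ)}
    (ha : a ∈ Sol v₀ v w₀ w) (hb : b ∈ Sol v₀ v w₀ w) (hr : b = a + r) (hne : r ≠ 0) :
    r ∈ Homo v w := by
  refine ⟨hne, ?_⟩
  simp only [Sol, Set.mem_setOf_eq] at ha hb
  subst hr
  simp only [Prod.fst_add, Prod.snd_add, map_add] at hb
  funext x
  have h1 := congrFun ha x
  have h2 := congrFun hb x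
  simp only [Pi.add_apply] at h1 h2 ⊢
  omega

/-- Every nonzero homogeneous solution is above a minimal one. -/
theorem exists_min_homo_le_aux (n : ℕ) :
    ∀ h ∈ Homo v w, μ h ≤ n → ∃ g ∈ Homo v w, g ≤ h ∧ ∀ q ∈ Homo v w, q ≤ g → q = g := by
  induction n with
  | zero =>
    intro h hh hn
    refine ⟨h, hh, le_refl h, fun q hq hqle => ?_⟩
    by_contra hqne
    obtain ⟨r, hr⟩ := exists_add_of_le' hqle
    have hrne : r ≠ 0 := by rintro rfl; exact hqne (by simp [hr])
    have := μ_pos hrne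
    have := μ_pos hh.1
    have : μ h = μ q + μ r := by rw [hr, μ_add]
    omega
  | succ n ih =>
    intro h hh hn
    by_cases hmin : ∀ q ∈ Homo v w, q ≤ h → q = h
    · exact ⟨h, hh, le_refl h, hmin⟩
    · push_neg at hmin
      obtain ⟨q, hq, hqle, hqne⟩ := hmin
      obtain ⟨r, hr⟩ := exists_add_of_le' hqle
      have hrne : r ≠ 0 := by rintro rfl; exact hqne (by simp [hr])
      have hlt : μ q < μ h := by
        rw [hr, μ_add]; have := μ_pos hrne; omega
      obtain ⟨g, hg, hgle, hgmin⟩ := ih q hq (by omega)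
      exact ⟨g, hg, le_trans hgle hqle, hgmin⟩

theorem exists_min_homo_le {h : (Fin l → ℕ) × (Fin m → ℕ)} (hh : h ∈ Homo v w) :
    ∃ g ∈ Homo v w, g ≤ h ∧ ∀ q ∈ Homo v w, q ≤ g → q = g :=
  exists_min_homo_le_aux (μ h) h hh (le_refl _)

/-- Minimal nonzero homogeneous solutions. -/
def Hmin (v : Fin l → α → ℕ) (w : Fin m → α → ℕ) : Set ((Fin l → ℕ) × (Fin m → ℕ)) :=
  {p | p ∈ Homo v w ∧ ∀ q ∈ Homo v w, q ≤ p → q = p}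

/-- Solutions with no homogeneous solution below them. -/
def Tmin (v₀ : α → ℕ) (v : Fin l → α → ℕ) (w₀ : α → ℕ) (w : Fin m → α → ℕ) :
    Set ((Fin l → ℕ) × (Fin m → ℕ)) :=
  {p | p ∈ Sol v₀ v w₀ w ∧ ∀ q ∈ Homo v w, ¬ q ≤ p}

theorem univ_isPWO : (Set.univ : Set ((Fin l → ℕ) × (Fin m → ℕ))).IsPWO := by
  have h1 : (Set.univ : Set (Fin l → ℕ)).IsPWO :=
    Set.isPWO_of_wellQuasiOrderedLE _
  have h2 : (Set.univ : Set (Fin m → ℕ)).IsPWO :=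
    Set.isPWO_of_wellQuasiOrderedLE _
  simpa [Set.univ_prod_univ] using h1.prod h2

theorem finite_of_antichain {s : Set ((Fin l → ℕ) × (Fin m → ℕ))}
    (hs : IsAntichain (· ≤ ·) s) : s.Finite :=
  hs.finite_of_partiallyWellOrderedOn (univ_isPWO.mono (Set.subset_univ s))

theorem hmin_finite : (Hmin v w).Finite := by
  refine finite_of_antichain fun a ha b hb hne hle => ?_
  exact hne (hb.2 a ha.1 hle)

theorem tmin_finite : (Tmin v₀ v w₀ w).Finite := by
  refine finite_of_antichain fun a ha b hb hne hle => ?_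
  obtain ⟨r, hr⟩ := exists_add_of_le' hle
  have hrne : r ≠ 0 := by rintro rfl; exact hne (by simp [hr])
  have hhom : r ∈ Homo v w := diff_homo ha.1 hb.1 hr hrne
  exact hb.2 r hhom (hr ▸ le_add_right' a r)

theorem sum_indicator {nH : ℕ} (g : Fin nH → (Fin l → ℕ) × (Fin m → ℕ))
    (c : Fin nH → ℕ) (j₀ : Fin nH) :
    ∑ j, (c j + if j = j₀ then 1 else 0) • g j = (∑ j, c j • g j) + g j₀ := by
  simp only [add_smul, ite_smul, one_smul, zero_smul, Finset.sum_add_distrib]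
  rw [Finset.sum_ite_eq' Finset.univ j₀ g]
  simp

theorem repr_aux {nH : ℕ} (g : Fin nH → (Fin l → ℕ) × (Fin m → ℕ))
    (hg : Set.range g = Hmin v w) (N : ℕ) :
    ∀ x ∈ Sol v₀ v w₀ w, μ x ≤ N →
      ∃ s ∈ Tmin v₀ v w₀ w, ∃ c : Fin nH → ℕ, x = s + ∑ j, c j • g j := by
  induction N with
  | zero =>
    intro x hx hμ
    refine ⟨x, ⟨hx, fun q hq hqle => ?_⟩, 0, by simp⟩
    obtain ⟨r, hr⟩ := exists_add_of_le' hqle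
    have : μ x = μ q + μ r := by rw [hr, μ_add]
    have := μ_pos hq.1
    omega
  | succ N ih =>
    intro x hx hμ
    by_cases hT : ∀ q ∈ Homo v w, ¬ q ≤ x
    · exact ⟨x, ⟨hx, hT⟩, 0, by simp⟩
    · push_neg at hT
      obtain ⟨h, hh, hhle⟩ := hT
      obtain ⟨g', hg', hg'le, hg'min⟩ := exists_min_homo_le hh
      have hg'x : g' ≤ x := le_trans hg'le hhle
      obtain ⟨j₀, hj₀⟩ : ∃ j₀, g j₀ = g' := by
        have : g' ∈ Set.range g := hg ▸ (⟨hg', hg'min⟩ : g' ∈ Hmin v w)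
        exact this
      obtain ⟨r, hr⟩ := exists_add_of_le' hg'x
      have hrsol : r ∈ Sol v₀ v w₀ w := sub_mem_sol hx hg'.2 hr
      have hμr : μ r ≤ N := by
        have : μ x = μ g' + μ r := by rw [hr, μ_add]
        have := μ_pos hg'.1
        omega
      obtain ⟨s, hs, c, hc⟩ := ih r hrsol hμr
      refine ⟨s, hs, fun j => c j + if j = j₀ then 1 else 0, ?_⟩
      rw [sum_indicator g c j₀, hj₀, hr, hc]
      abel

theorem sol_add_combo {nH : ℕ} {g : Fin nH → (Fin l → ℕ) × (Fin m → ℕ)}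
    (hg : ∀ j, g j ∈ Homo v w) {s : (Fin l → ℕ) × (Fin m → ℕ)}
    (hs : s ∈ Sol v₀ v w₀ w) (c : Fin nH → ℕ) :
    s + ∑ j, c j • g j ∈ Sol v₀ v w₀ w := by
  have key : comb v (∑ j, c j • g j).1 = comb w (∑ j, c j • g j).2 := by
    have h1 : (∑ j, c j • g j).1 = ∑ j, c j • (g j).1 := by
      rw [Prod.fst_sum]
      exact Finset.sum_congr rfl fun j _ => Prod.smul_fst ..
    have h2 : (∑ j, c j • g j).2 = ∑ j, c j • (g j).2 := by
      rw [Prod.snd_sum]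
      exact Finset.sum_congr rfl fun j _ => Prod.smul_snd ..
    rw [h1, h2, map_sum, map_sum]
    refine Finset.sum_congr rfl fun j _ => ?_
    rw [AddMonoidHom.map_nsmul, AddMonoidHom.map_nsmul, (hg j).2]
  simp only [Sol, Set.mem_setOf_eq] at hs ⊢
  simp only [Prod.fst_add, Prod.snd_add, map_add]
  rw [← add_assoc, ← add_assoc, hs, key]

end SLAux2

namespace SLAux3
open SLAux SLAux2

variable {α : Type*} {l m : ℕ}

theorem comb_apply {l : ℕ} (v : Fin l → α → ℕ) (c : Fin l → ℕ) :
    comb v c = ∑ j, c j • v j := rfl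

theorem fst_sum_smul {nH : ℕ} (c : Fin nH → ℕ) (g : Fin nH → (Fin l → ℕ) × (Fin m → ℕ)) :
    (∑ j, c j • g j).1 = ∑ j, c j • (g j).1 := by
  rw [Prod.fst_sum]
  exact Finset.sum_congr rfl fun j _ => Prod.smul_fst ..

theorem comb_fst_combo {nH : ℕ} (v : Fin l → α → ℕ) (s : (Fin l → ℕ) × (Fin m → ℕ))
    (c : Fin nH → ℕ) (g : Fin nH → (Fin l → ℕ) × (Fin m → ℕ)) :
    comb v (s + ∑ j, c j • g j).1 = comb v s.1 + ∑ j, c j • comb v ((g j).1) := by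
  rw [Prod.fst_add, fst_sum_smul, map_add, map_sum]
  congr 1
  exact Finset.sum_congr rfl fun j _ => AddMonoidHom.map_nsmul _ _ _

theorem isSemilinearSet_inter_of_linear {A B : Set (α → ℕ)}
    (hA : IsLinearSet' A) (hB : IsLinearSet' B) : IsSemilinearSet' (A ∩ B) := by
  obtain ⟨v₀, l, v, rfl⟩ := hA
  obtain ⟨w₀, m, w, rfl⟩ := hB
  obtain ⟨nH, gH, hgH⟩ := (hmin_finite (v := v) (w := w)).fin_embedding
  obtain ⟨nT, gT, hgT⟩ := (tmin_finite (v₀ := v₀) (v := v) (w₀ := w₀) (w := w)).fin_embedding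
  refine ⟨nT, fun i => {x | ∃ c : Fin nH → ℕ,
    x = (v₀ + comb v (gT i).1) + ∑ j, c j • comb v ((gH j).1)},
    fun i => ⟨v₀ + comb v (gT i).1, nH, fun j => comb v ((gH j).1), rfl⟩, ?_⟩
  have hgHmem : ∀ j, gH j ∈ Homo v w := fun j =>
    (Set.range_subset_iff.mp (le_of_eq hgH) j).1
  ext x
  simp only [Set.mem_inter_iff, Set.mem_setOf_eq, Set.mem_iUnion]
  constructor
  · rintro ⟨⟨c₁, hc₁⟩, ⟨c₂, hc₂⟩⟩
    have hsol : (c₁, c₂) ∈ Sol v₀ v w₀ w := by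
      show v₀ + comb v c₁ = w₀ + comb w c₂
      rw [comb_apply, comb_apply, ← hc₁, ← hc₂]
    obtain ⟨s, hs, c, hc⟩ :=
      repr_aux (⇑gH) hgH (μ (c₁, c₂)) (c₁, c₂) hsol (le_refl _)
    obtain ⟨i, hi⟩ : ∃ i, gT i = s := by rw [← hgT] at hs; exact hs
    refine ⟨i, c, ?_⟩
    have hx : x = v₀ + comb v (((c₁, c₂) : (Fin l → ℕ) × (Fin m → ℕ))).1 := by
      rw [comb_apply]; exact hc₁
    rw [hx, hc, comb_fst_combo, hi, add_assoc]
  · rintro ⟨i, c, hc⟩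
    have hsT : gT i ∈ Tmin v₀ v w₀ w := hgT ▸ Set.mem_range_self i
    have hsol : gT i + ∑ j, c j • gH j ∈ Sol v₀ v w₀ w :=
      sol_add_combo hgHmem hsT.1 c
    have hx1 : x = v₀ + comb v (gT i + ∑ j, c j • gH j).1 := by
      rw [comb_fst_combo, ← add_assoc, ← hc]
    constructor
    · exact ⟨(gT i + ∑ j, c j • gH j).1, by rw [hx1, comb_apply]⟩
    · refine ⟨(gT i + ∑ j, c j • gH j).2, ?_⟩
      rw [← comb_apply, hx1, hsol]

end SLAux3

namespace SLAux4
open SLAux3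

variable {α : Type*}

theorem isSemilinearSet_union {A B : Set (α → ℕ)}
    (hA : IsSemilinearSet' A) (hB : IsSemilinearSet' B) : IsSemilinearSet' (A ∪ B) := by
  obtain ⟨n, As, hAs, rfl⟩ := hA
  obtain ⟨p, Bs, hBs, rfl⟩ := hB
  refine ⟨n + p, fun i => Sum.elim As Bs (finSumFinEquiv.symm i), fun i => ?_, ?_⟩
  · show IsLinearSet' (Sum.elim As Bs (finSumFinEquiv.symm i))
    cases h : finSumFinEquiv.symm i with
    | inl j => exact hAs j
    | inr j => exact hBs j
  · have key := Function.Surjective.iUnion_comp (f := finSumFinEquiv.symm)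
      finSumFinEquiv.symm.surjective (fun s => Sum.elim As Bs s)
    rw [Set.iUnion_sum] at key
    exact key.symm

theorem isSemilinearSet_empty : IsSemilinearSet' (∅ : Set (α → ℕ)) :=
  ⟨0, Fin.elim0, fun i => i.elim0, (Set.iUnion_of_empty _).symm⟩

theorem isSemilinearSet_iUnion {n : ℕ} (f : Fin n → Set (α → ℕ))
    (h : ∀ i, IsSemilinearSet' (f i)) : IsSemilinearSet' (⋃ i, f i) := by
  induction n with
  | zero => rw [Set.iUnion_of_empty]; exact isSemilinearSet_empty
  | succ n ih =>
    have he : ⋃ i, f i = f 0 ∪ ⋃ i : Fin n, f i.succ := by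
      ext x
      simp only [Set.mem_iUnion, Set.mem_union]
      constructor
      · rintro ⟨i, hi⟩
        rcases Fin.eq_zero_or_eq_succ i with rfl | ⟨j, rfl⟩
        · exact Or.inl hi
        · exact Or.inr ⟨j, hi⟩
      · rintro (hx | ⟨j, hj⟩)
        · exact ⟨0, hx⟩
        · exact ⟨j.succ, hj⟩
    rw [he]
    exact isSemilinearSet_union (h 0) (ih _ fun i => h i.succ)

end SLAux4

/-- For every k ≥ 1 and all semilinear sets Q₁, Q₂ ⊆ ℕ^k, the
intersection Q₁ ∩ Q₂ is a semilinear subset of ℕ^k. -/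
theorem semilinearSet_inter {k : ℕ} (hk : 1 ≤ k) (Q₁ Q₂ : Set (Fin k → ℕ))
    (h₁ : IsSemilinearSet' Q₁) (h₂ : IsSemilinearSet' Q₂) :
    IsSemilinearSet' (Q₁ ∩ Q₂) := by
  obtain ⟨n, As, hAs, rfl⟩ := h₁
  obtain ⟨p, Bs, hBs, rfl⟩ := h₂
  rw [Set.iUnion_inter]
  refine SLAux4.isSemilinearSet_iUnion _ fun i => ?_
  rw [Set.inter_iUnion]
  exact SLAux4.isSemilinearSet_iUnion _ fun j =>
    SLAux3.isSemilinearSet_inter_of_linear (hAs i) (hBs j)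
end

section
/- Let Σ and Γ be finite alphabets, let L ⊆ Σ* be a semilinear language, and for each letter a ∈ Σ let L_a ⊆ Γ* be a semilinear language. Then the substitution σ(L) = {u₁u₂⋯u_n : n ≥ 0, a₁a₂⋯a_n ∈ L with each a_i ∈ Σ, and u_i ∈ L_{a_i} for each i} is a semilinear language over Γ. -/
namespace SLS
open Pointwise

variable {α : Type*} {ι : Type*}

lemma isLinearSet_singleton (v : α → ℕ) : IsLinearSet' {v} := by
  refine ⟨v, 0, ![], ?_⟩
  ext x
  simp [eq_comm]

lemma linear_semilinear {Q : Set (α → ℕ)} (h : IsLinearSet' Q) :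
    IsSemilinearSet' Q := ⟨1, fun _ => Q, fun _ => h, (Set.iUnion_const Q).symm⟩

lemma isSemilinearSet_singleton (v : α → ℕ) : IsSemilinearSet' {v} :=
  linear_semilinear (isLinearSet_singleton v)

lemma isSemilinearSet_empty : IsSemilinearSet' (∅ : Set (α → ℕ)) :=
  ⟨0, ![], by simp, by simp⟩

lemma isSemilinearSet_iUnion [Fintype ι] {Q : ι → Set (α → ℕ)}
    (h : ∀ i, IsSemilinearSet' (Q i)) : IsSemilinearSet' (⋃ i, Q i) := by
  choose n Qs hlin hQ using h
  let T := Σ i, Fin (n i)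
  have e : Fin (Fintype.card T) ≃ T := (Fintype.equivFin T).symm
  refine ⟨Fintype.card T, fun k => Qs (e k).1 (e k).2, fun k => hlin _ _, ?_⟩
  ext x
  simp only [Set.mem_iUnion]
  constructor
  · rintro ⟨i, hx⟩
    rw [hQ i] at hx
    obtain ⟨j, hj⟩ := Set.mem_iUnion.1 hx
    refine ⟨e.symm ⟨i, j⟩, ?_⟩
    rw [e.apply_symm_apply]
    exact hj
  · rintro ⟨k, hk⟩
    exact ⟨(e k).1, by rw [hQ]; exact Set.mem_iUnion.2 ⟨(e k).2, hk⟩⟩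

lemma linear_add {Q R : Set (α → ℕ)} (hQ : IsLinearSet' Q) (hR : IsLinearSet' R) :
    IsLinearSet' (Q + R) := by
  obtain ⟨v₀, l, v, rfl⟩ := hQ
  obtain ⟨w₀, m, w, rfl⟩ := hR
  refine ⟨v₀ + w₀, l + m, Fin.append v w, ?_⟩
  ext x
  simp only [Set.mem_add, Set.mem_setOf_eq]
  constructor
  · rintro ⟨-, ⟨c, rfl⟩, -, ⟨d, rfl⟩, rfl⟩
    refine ⟨Fin.append c d, ?_⟩
    rw [Fin.sum_univ_add]
    simp only [Fin.append_left, Fin.append_right]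
    abel
  · rintro ⟨c, rfl⟩
    refine ⟨v₀ + ∑ j, c (Fin.castAdd m j) • v j, ⟨_, rfl⟩,
      w₀ + ∑ j, c (Fin.natAdd l j) • w j, ⟨_, rfl⟩, ?_⟩
    rw [Fin.sum_univ_add]
    simp only [Fin.append_left, Fin.append_right]
    abel

lemma semilinear_add {Q R : Set (α → ℕ)} (hQ : IsSemilinearSet' Q)
    (hR : IsSemilinearSet' R) : IsSemilinearSet' (Q + R) := by
  obtain ⟨n, Qs, hQlin, rfl⟩ := hQ
  obtain ⟨m, Rs, hRlin, rfl⟩ := hR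
  have : (⋃ i, Qs i) + (⋃ j, Rs j) = ⋃ p : Fin n × Fin m, (Qs p.1 + Rs p.2) := by
    rw [Set.iUnion_add]
    ext x
    simp only [Set.mem_iUnion, Set.add_iUnion]
    exact ⟨fun ⟨i, j, h⟩ => ⟨(i, j), h⟩, fun ⟨p, h⟩ => ⟨p.1, p.2, h⟩⟩
  rw [this]
  exact isSemilinearSet_iUnion fun p => linear_semilinear (linear_add (hQlin p.1) (hRlin p.2))

lemma isSemilinearSet_zero : IsSemilinearSet' (0 : Set (α → ℕ)) := by
  exact isSemilinearSet_singleton (0 : α → ℕ)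


/-- All finite sums of elements of `A`. -/
def star (A : Set (α → ℕ)) : Set (α → ℕ) :=
  {x | ∃ l : List (α → ℕ), (∀ y ∈ l, y ∈ A) ∧ x = l.sum}

/-- Sums of exactly `n` elements of `A`. -/
def nsum (n : ℕ) (A : Set (α → ℕ)) : Set (α → ℕ) :=
  {x | ∃ l : List (α → ℕ), l.length = n ∧ (∀ y ∈ l, y ∈ A) ∧ x = l.sum}

open Classical in
/-- Minkowski sum of a finite family of sets. -/
noncomputable def setSum (s : Finset ι) (F : ι → Set (α → ℕ)) : Set (α → ℕ) :=
  {x | ∃ g : ι → (α → ℕ), (∀ i ∈ s, g i ∈ F i) ∧ x = ∑ i ∈ s, g i}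

lemma zero_mem_star (A : Set (α → ℕ)) : 0 ∈ star A := ⟨[], by simp, by simp⟩

lemma mem_star_of_mem {A : Set (α → ℕ)} {y : α → ℕ} (h : y ∈ A) : y ∈ star A :=
  ⟨[y], by simpa using h, by simp⟩

lemma add_mem_star {A : Set (α → ℕ)} {y z : α → ℕ} (hy : y ∈ star A)
    (hz : z ∈ star A) : y + z ∈ star A := by
  obtain ⟨l, hl, rfl⟩ := hy
  obtain ⟨m, hm, rfl⟩ := hz
  exact ⟨l ++ m, fun u hu => ((List.mem_append).1 hu).elim (hl u) (hm u),
    (List.sum_append).symm⟩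

lemma star_linear {Q : Set (α → ℕ)} (h : IsLinearSet' Q) :
    IsSemilinearSet' (star Q) := by
  obtain ⟨v₀, l, v, rfl⟩ := h
  have key : star {x | ∃ c : Fin l → ℕ, x = v₀ + ∑ j, c j • v j} =
      {(0 : α → ℕ)} ∪ {x | ∃ c : Fin (l + 1) → ℕ,
        x = v₀ + ∑ j, c j • (Fin.cons v₀ v : Fin (l+1) → α → ℕ) j} := by
    ext x
    constructor
    · rintro ⟨w, hw, rfl⟩
      induction w with
      | nil => exact Or.inl rfl
      | cons y w ih =>
        obtain ⟨c, hc⟩ := hw y (List.mem_cons_self)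
        have hsum := ih (fun u hu => hw u (List.mem_cons_of_mem y hu))
        rcases hsum with h0 | ⟨d, hd⟩
        · refine Or.inr ⟨Fin.cons 0 c, ?_⟩
          have h0' : (w.sum : α → ℕ) = 0 := h0
          simp only [List.sum_cons, h0', add_zero, hc, Fin.sum_univ_succ,
            Fin.cons_zero, Fin.cons_succ, zero_smul, zero_add]
        · refine Or.inr ⟨Fin.cons (d 0 + 1) (fun j => c j + d j.succ), ?_⟩
          have hd' : (w.sum : α → ℕ) = v₀ + ∑ j, d j • (Fin.cons v₀ v : Fin (l+1) → α → ℕ) j := hd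
          simp only [List.sum_cons, hc, hd', Fin.sum_univ_succ, Fin.cons_zero,
            Fin.cons_succ] at *
          simp only [add_smul, one_smul, add_smul]
          rw [Finset.sum_add_distrib]
          abel
    · rintro (rfl | ⟨c, rfl⟩)
      · exact zero_mem_star _
      · refine ⟨(v₀ + ∑ j, c j.succ • v j) :: List.replicate (c 0) v₀, ?_, ?_⟩
        · intro y hy
          rcases List.mem_cons.1 hy with rfl | hy
          · exact ⟨fun j => c j.succ, rfl⟩
          · rw [List.eq_of_mem_replicate hy]
            exact ⟨0, by simp⟩
        · rw [List.sum_cons, List.sum_replicate, Fin.sum_univ_succ]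
          simp only [Fin.cons_zero, Fin.cons_succ]
          abel
  rw [key]
  have h1 : IsSemilinearSet' ({(0 : α → ℕ)} : Set (α → ℕ)) := isSemilinearSet_singleton 0
  obtain ⟨n₁, Q₁, hQ₁, e₁⟩ := h1
  refine ⟨n₁ + 1, Fin.snoc Q₁ {x | ∃ c : Fin (l + 1) → ℕ,
      x = v₀ + ∑ j, c j • (Fin.cons v₀ v : Fin (l+1) → α → ℕ) j}, ?_, ?_⟩
  · intro i
    induction i using Fin.lastCases with
    | last =>
      simp only [Fin.snoc_last]
      exact ⟨v₀, l + 1, _, rfl⟩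
    | cast j =>
      simp only [Fin.snoc_castSucc]
      exact hQ₁ j
  · ext x
    simp only [Set.mem_union, e₁, Set.mem_iUnion]
    constructor
    · rintro (⟨i, h⟩ | h)
      · exact ⟨i.castSucc, by simpa using h⟩
      · exact ⟨Fin.last n₁, by simpa using h⟩
    · rintro ⟨i, h⟩
      induction i using Fin.lastCases with
      | last => right; simpa using h
      | cast j => left; exact ⟨j, by simpa using h⟩

lemma star_union {A B : Set (α → ℕ)} : star (A ∪ B) = star A + star B := by
  ext x
  constructor
  · rintro ⟨w, hw, rfl⟩
    induction w with
    | nil => exact ⟨0, zero_mem_star _, 0, zero_mem_star _, by simp⟩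
    | cons y w ih =>
      obtain ⟨a, ha, b, hb, hab⟩ := ih (fun u hu => hw u (List.mem_cons_of_mem y hu))
      rcases hw y (List.mem_cons_self) with hy | hy
      · exact ⟨y + a, add_mem_star (mem_star_of_mem hy) ha, b, hb,
          by rw [List.sum_cons, ← hab]; beta_reduce; abel⟩
      · exact ⟨a, ha, y + b, add_mem_star (mem_star_of_mem hy) hb,
          by rw [List.sum_cons, ← hab]; beta_reduce; abel⟩
  · rintro ⟨a, ⟨la, hla, rfl⟩, b, ⟨lb, hlb, rfl⟩, rfl⟩
    exact ⟨la ++ lb, fun u hu => ((List.mem_append).1 hu).elim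
      (fun h => Or.inl (hla u h)) (fun h => Or.inr (hlb u h)),
      (List.sum_append).symm⟩

lemma semilinear_star {Q : Set (α → ℕ)} (h : IsSemilinearSet' Q) :
    IsSemilinearSet' (star Q) := by
  obtain ⟨n, Qs, hlin, rfl⟩ := h
  induction n with
  | zero =>
    have : (⋃ i : Fin 0, Qs i) = (∅ : Set (α → ℕ)) := by simp
    rw [this]
    have : star (∅ : Set (α → ℕ)) = {0} := by
      ext x
      constructor
      · rintro ⟨w, hw, rfl⟩
        have : w = [] := by
          cases w with
          | nil => rfl
          | cons y w => exact absurd (hw y (List.mem_cons_self)) (Set.notMem_empty y)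
        simp [this]
      · rintro rfl; exact zero_mem_star _
    rw [this]
    exact isSemilinearSet_singleton 0
  | succ n ih =>
    have hsplit : (⋃ i : Fin (n+1), Qs i) = Qs 0 ∪ ⋃ i : Fin n, Qs i.succ := by
      ext x
      simp only [Set.mem_iUnion, Set.mem_union]
      constructor
      · rintro ⟨i, h⟩
        rcases Fin.eq_zero_or_eq_succ i with rfl | ⟨j, rfl⟩
        · exact Or.inl h
        · exact Or.inr ⟨j, h⟩
      · rintro (h | ⟨i, h⟩)
        · exact ⟨0, h⟩
        · exact ⟨i.succ, h⟩
    rw [hsplit, star_union]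
    exact semilinear_add (star_linear (hlin 0)) (ih _ (fun i => hlin i.succ))


lemma nsum_zero (A : Set (α → ℕ)) : nsum 0 A = {0} := by
  ext x
  constructor
  · rintro ⟨l, hl, -, rfl⟩
    rw [List.length_eq_zero_iff] at hl
    simp [hl]
  · rintro rfl
    exact ⟨[], rfl, by simp, by simp⟩

lemma nsum_succ (n : ℕ) (A : Set (α → ℕ)) : nsum (n + 1) A = A + nsum n A := by
  ext x
  constructor
  · rintro ⟨l, hl, hmem, rfl⟩
    cases l with
    | nil => simp at hl
    | cons y l =>
      exact ⟨y, hmem y (List.mem_cons_self),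
        l.sum, ⟨l, by simpa using hl, fun u hu => hmem u (List.mem_cons_of_mem y hu), rfl⟩,
        (List.sum_cons).symm⟩
  · rintro ⟨a, ha, b, ⟨l, hl, hmem, rfl⟩, rfl⟩
    exact ⟨a :: l, by simp [hl], fun u hu => (List.mem_cons.1 hu).elim (fun h => h ▸ ha)
      (hmem u), (List.sum_cons).symm⟩

lemma semilinear_nsum (n : ℕ) {A : Set (α → ℕ)} (h : IsSemilinearSet' A) :
    IsSemilinearSet' (nsum n A) := by
  induction n with
  | zero => rw [nsum_zero]; exact isSemilinearSet_singleton 0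
  | succ n ih => rw [nsum_succ]; exact semilinear_add h ih

lemma nsum_add (m n : ℕ) (A : Set (α → ℕ)) :
    nsum (m + n) A = nsum m A + nsum n A := by
  ext x
  constructor
  · rintro ⟨l, hl, hmem, rfl⟩
    refine ⟨(l.take m).sum, ⟨l.take m, ?_, fun u hu => hmem u (List.mem_of_mem_take hu), rfl⟩,
      (l.drop m).sum, ⟨l.drop m, ?_, fun u hu => hmem u (List.mem_of_mem_drop hu), rfl⟩, ?_⟩
    · rw [List.length_take, hl]; omega
    · rw [List.length_drop, hl]; omega
    · show (List.take m l).sum + (List.drop m l).sum = l.sum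
      rw [← List.sum_append, List.take_append_drop]
  · rintro ⟨a, ⟨la, hla, hma, rfl⟩, b, ⟨lb, hlb, hmb, rfl⟩, rfl⟩
    exact ⟨la ++ lb, by simp [hla, hlb], fun u hu => ((List.mem_append).1 hu).elim (hma u)
      (hmb u), (List.sum_append).symm⟩

lemma nsum_singleton_zero (n : ℕ) : nsum n ({0} : Set (α → ℕ)) = {0} := by
  induction n with
  | zero => exact nsum_zero _
  | succ n ih => rw [nsum_succ, ih]; ext x; simp

lemma nsum_mul (m n : ℕ) (A : Set (α → ℕ)) :
    nsum (m * n) A = nsum m (nsum n A) := by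
  induction m with
  | zero => simp [nsum_zero]
  | succ m ih =>
    have : (m + 1) * n = n + m * n := by ring
    rw [this, nsum_add, ih, nsum_succ]

lemma nsum_add_set (c : ℕ) (A B : Set (α → ℕ)) :
    nsum c (A + B) = nsum c A + nsum c B := by
  induction c with
  | zero =>
    simp only [nsum_zero]
    ext x; constructor
    · rintro rfl; exact ⟨0, rfl, 0, rfl, by simp⟩
    · rintro ⟨a, rfl, b, rfl, rfl⟩; simp
  | succ c ih =>
    rw [nsum_succ, nsum_succ, nsum_succ, ih]
    ext x; constructor
    · rintro ⟨y, ⟨a, ha, b, hb, rfl⟩, z, ⟨p, hp, q, hq, rfl⟩, rfl⟩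
      exact ⟨a + p, ⟨a, ha, p, hp, rfl⟩, b + q, ⟨b, hb, q, hq, rfl⟩, by beta_reduce; abel⟩
    · rintro ⟨y, ⟨a, ha, p, hp, rfl⟩, z, ⟨b, hb, q, hq, rfl⟩, rfl⟩
      exact ⟨a + b, ⟨a, ha, b, hb, rfl⟩, p + q, ⟨p, hp, q, hq, rfl⟩, by beta_reduce; abel⟩

open Classical in
lemma setSum_empty (F : ι → Set (α → ℕ)) : setSum (∅ : Finset ι) F = {0} := by
  ext x
  simp [setSum]

open Classical in
lemma setSum_insert {s : Finset ι} {a : ι} (ha : a ∉ s) (F : ι → Set (α → ℕ)) :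
    setSum (insert a s) F = F a + setSum s F := by
  classical
  ext x
  constructor
  · rintro ⟨g, hg, rfl⟩
    refine ⟨g a, hg a (Finset.mem_insert_self a s),
      ∑ i ∈ s, g i, ⟨g, fun i hi => hg i (Finset.mem_insert_of_mem hi), rfl⟩, ?_⟩
    rw [Finset.sum_insert ha]
  · rintro ⟨y, hy, z, ⟨g, hg, rfl⟩, rfl⟩
    refine ⟨Function.update g a y, ?_, ?_⟩
    · intro i hi
      rcases Finset.mem_insert.1 hi with rfl | hi
      · rw [Function.update_self]; exact hy
      · have hne : i ≠ a := fun h => ha (h ▸ hi)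
        rw [Function.update_of_ne hne]; exact hg i hi
    · rw [Finset.sum_insert ha, Function.update_self, Finset.sum_update_of_notMem ha]

open Classical in
lemma setSum_congr {s : Finset ι} {F G : ι → Set (α → ℕ)}
    (h : ∀ i ∈ s, F i = G i) : setSum s F = setSum s G := by
  unfold setSum
  ext x
  constructor <;> rintro ⟨g, hg, rfl⟩ <;> exact ⟨g, fun i hi => by
    first
    | (rw [← h i hi]; exact hg i hi)
    | (rw [h i hi]; exact hg i hi), rfl⟩

lemma semilinear_setSum (s : Finset ι) {F : ι → Set (α → ℕ)}
    (h : ∀ i ∈ s, IsSemilinearSet' (F i)) : IsSemilinearSet' (setSum s F) := by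
  classical
  induction s using Finset.induction with
  | empty => rw [setSum_empty]; exact isSemilinearSet_singleton 0
  | insert _ _ ha ih =>
    rw [setSum_insert ha]
    exact semilinear_add (h _ (Finset.mem_insert_self _ _))
      (ih fun i hi => h i (Finset.mem_insert_of_mem hi))

lemma setSum_add (s : Finset ι) (F G : ι → Set (α → ℕ)) :
    setSum s (fun i => F i + G i) = setSum s F + setSum s G := by
  classical
  induction s using Finset.induction with
  | empty =>
    simp only [setSum_empty]
    ext x; constructor
    · rintro rfl; exact ⟨0, rfl, 0, rfl, by simp⟩
    · rintro ⟨a, rfl, b, rfl, rfl⟩; simp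
  | insert _ _ ha ih =>
    rw [setSum_insert ha, setSum_insert ha, setSum_insert ha, ih]
    ext x; constructor
    · rintro ⟨y, ⟨a, ha', b, hb, rfl⟩, z, ⟨p, hp, q, hq, rfl⟩, rfl⟩
      exact ⟨a + p, ⟨a, ha', p, hp, rfl⟩, b + q, ⟨b, hb, q, hq, rfl⟩, by beta_reduce; abel⟩
    · rintro ⟨y, ⟨a, ha', p, hp, rfl⟩, z, ⟨b, hb, q, hq, rfl⟩, rfl⟩
      exact ⟨a + b, ⟨a, ha', b, hb, rfl⟩, p + q, ⟨p, hp, q, hq, rfl⟩, by beta_reduce; abel⟩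

lemma setSum_const_zero (s : Finset ι) :
    setSum s (fun _ => ({0} : Set (α → ℕ))) = {0} := by
  classical
  induction s using Finset.induction with
  | empty => exact setSum_empty _
  | insert _ _ ha ih => rw [setSum_insert ha, ih]; ext x; simp

lemma nsum_setSum (c : ℕ) (s : Finset ι) (F : ι → Set (α → ℕ)) :
    setSum s (fun i => nsum c (F i)) = nsum c (setSum s F) := by
  classical
  induction s using Finset.induction with
  | empty => rw [setSum_empty, setSum_empty, nsum_singleton_zero]
  | insert _ _ ha ih =>
    rw [setSum_insert ha, setSum_insert ha, ih, nsum_add_set]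


lemma mem_star_iff_nsum {A : Set (α → ℕ)} {x : α → ℕ} :
    x ∈ star A ↔ ∃ c : ℕ, x ∈ nsum c A := by
  constructor
  · rintro ⟨l, hl, rfl⟩
    exact ⟨l.length, l, rfl, hl, rfl⟩
  · rintro ⟨c, l, -, hl, rfl⟩
    exact ⟨l, hl, rfl⟩

lemma setSum_swap {κ : Type*} (s : Finset ι) (t : Finset κ) (h : κ → ι → ℕ)
    (S : ι → Set (α → ℕ)) :
    setSum s (fun a => nsum (∑ j ∈ t, h j a) (S a)) =
      setSum t (fun j => setSum s (fun a => nsum (h j a) (S a))) := by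
  classical
  induction t using Finset.induction with
  | empty =>
    rw [setSum_empty, show (fun a => nsum (∑ j ∈ (∅ : Finset κ), h j a) (S a)) =
      (fun _ : ι => ({0} : Set (α → ℕ))) from funext fun a => by rw [Finset.sum_empty, nsum_zero],
      setSum_const_zero]
  | insert _ _ hj ih =>
    rename_i j t
    rw [setSum_insert hj, ← ih,
      setSum_congr (fun a _ => by rw [Finset.sum_insert hj, nsum_add]), setSum_add]

lemma iUnion_setSum_nsum {κ : Type*} (t : Finset κ) (X : κ → Set (α → ℕ)) :
    (⋃ c : κ → ℕ, setSum t (fun j => nsum (c j) (X j))) =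
      setSum t (fun j => star (X j)) := by
  ext x
  simp only [Set.mem_iUnion]
  constructor
  · rintro ⟨c, g, hg, rfl⟩
    exact ⟨g, fun j hj => mem_star_iff_nsum.2 ⟨c j, hg j hj⟩, rfl⟩
  · rintro ⟨g, hg, rfl⟩
    have : ∀ j, ∃ c : ℕ, j ∈ t → g j ∈ nsum c (X j) := by
      intro j
      by_cases hj : j ∈ t
      · obtain ⟨c, hc⟩ := mem_star_iff_nsum.1 (hg j hj)
        exact ⟨c, fun _ => hc⟩
      · exact ⟨0, fun h => absurd h hj⟩
    choose c hc using this
    exact ⟨c, g, fun j hj => hc j hj, rfl⟩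

variable {σ : Type*} [Fintype σ]

/-- Sums over the alphabet of `x a`-fold sums of elements of `S a`. -/
noncomputable def bigSum (S : σ → Set (α → ℕ)) (x : σ → ℕ) : Set (α → ℕ) :=
  setSum Finset.univ (fun a => nsum (x a) (S a))

lemma bigSum_linear_decomp (S : σ → Set (α → ℕ)) (v₀ : σ → ℕ) (l : ℕ)
    (v : Fin l → σ → ℕ) (c : Fin l → ℕ) :
    bigSum S (v₀ + ∑ j, c j • v j) =
      bigSum S v₀ + setSum Finset.univ (fun j => nsum (c j) (bigSum S (v j))) := by
  unfold bigSum
  have h1 : (fun a => nsum ((v₀ + ∑ j, c j • v j) a) (S a)) =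
      fun a => nsum (v₀ a) (S a) + nsum (∑ j, c j * v j a) (S a) := by
    funext a
    rw [Pi.add_apply, Finset.sum_apply]
    simp only [Pi.smul_apply, smul_eq_mul]
    rw [nsum_add]
  rw [setSum_congr (fun a _ => congrFun h1 a), setSum_add,
    setSum_swap Finset.univ Finset.univ (fun j a => c j * v j a) S]
  congr 1
  refine setSum_congr fun j _ => ?_
  rw [setSum_congr (fun a _ => by rw [nsum_mul]), nsum_setSum]

lemma semilinear_bigSum_iUnion_linear (S : σ → Set (α → ℕ))
    (hS : ∀ a, IsSemilinearSet' (S a)) (v₀ : σ → ℕ) (l : ℕ) (v : Fin l → σ → ℕ) :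
    IsSemilinearSet' (⋃ x ∈ {x : σ → ℕ | ∃ c : Fin l → ℕ, x = v₀ + ∑ j, c j • v j},
      bigSum S x) := by
  have hbig : ∀ y : σ → ℕ, IsSemilinearSet' (bigSum S y) := fun y =>
    semilinear_setSum _ (fun a _ => semilinear_nsum _ (hS a))
  have key : (⋃ x ∈ {x : σ → ℕ | ∃ c : Fin l → ℕ, x = v₀ + ∑ j, c j • v j}, bigSum S x) =
      bigSum S v₀ + setSum Finset.univ (fun j => star (bigSum S (v j))) := by
    rw [← iUnion_setSum_nsum Finset.univ (fun j => bigSum S (v j)), Set.add_iUnion]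
    ext x
    simp only [Set.mem_iUnion, Set.mem_setOf_eq]
    constructor
    · rintro ⟨y, ⟨c, rfl⟩, hx⟩
      rw [bigSum_linear_decomp S v₀ l v c] at hx
      exact ⟨c, hx⟩
    · rintro ⟨c, hx⟩
      exact ⟨v₀ + ∑ j, c j • v j, ⟨c, rfl⟩, by
        rw [bigSum_linear_decomp S v₀ l v c]; exact hx⟩
  rw [key]
  exact semilinear_add (hbig v₀)
    (semilinear_setSum _ fun j _ => semilinear_star (hbig (v j)))

end SLS


namespace SLS2
open SLS

variable {σ γ : Type*}

open Classical

lemma parikh_nil : parikhWord ([] : List σ) = 0 := by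
  funext a; simp [parikhWord]

lemma parikh_append (u v : List σ) :
    parikhWord (u ++ v) = parikhWord u + parikhWord v := by
  funext a; simp [parikhWord, List.count_append]

lemma parikh_join (l : List (List σ)) :
    parikhWord l.flatten = (l.map parikhWord).sum := by
  induction l with
  | nil => simp [parikh_nil]
  | cons u l ih => simp [List.flatten, parikh_append, ih]

lemma parikh_cons (a : σ) (w : List σ) (b : σ) :
    parikhWord (a :: w) b = parikhWord w b + (if a = b then 1 else 0) := by
  simp only [parikhWord, List.count_cons]
  by_cases h : a = b <;> simp [h]

variable [Fintype σ]

lemma sum_filter_eq (ws : List (σ × List γ)) (F : σ × List γ → (γ → ℕ)) :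
    ∑ a : σ, ((ws.filter (fun p => p.1 = a)).map F).sum = (ws.map F).sum := by
  induction ws with
  | nil => simp
  | cons p ws ih =>
    have hstep : ∀ a : σ, ((List.filter (fun q => decide (q.1 = a)) (p :: ws)).map F).sum
        = (if p.1 = a then F p else 0) +
          ((ws.filter (fun q => decide (q.1 = a))).map F).sum := by
      intro a
      by_cases h : p.1 = a <;> simp [List.filter_cons, h]
    calc ∑ a : σ, ((List.filter (fun q => decide (q.1 = a)) (p :: ws)).map F).sum
        = ∑ a : σ, ((if p.1 = a then F p else 0) +
            ((ws.filter (fun q => decide (q.1 = a))).map F).sum) :=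
          Finset.sum_congr rfl fun a _ => hstep a
      _ = (∑ a : σ, if p.1 = a then F p else 0) +
            ∑ a : σ, ((ws.filter (fun q => decide (q.1 = a))).map F).sum :=
          Finset.sum_add_distrib
      _ = F p + (ws.map F).sum := by rw [Finset.sum_ite_eq, ih]; simp
      _ = ((p :: ws).map F).sum := by simp

lemma length_filter_eq_count (ws : List (σ × List γ)) (a : σ) :
    (ws.filter (fun p => p.1 = a)).length = parikhWord (ws.map Prod.fst) a := by
  induction ws with
  | nil => simp [parikh_nil]
  | cons p ws ih =>
    rw [List.map_cons, parikh_cons]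
    by_cases h : p.1 = a <;> simp [List.filter_cons, h, ih]

lemma exists_list_of_forall_mem_image {T : Set (List γ)} :
    ∀ {lv : List (γ → ℕ)}, (∀ y ∈ lv, y ∈ parikhWord '' T) →
      ∃ us : List (List γ), us.length = lv.length ∧ (∀ u ∈ us, u ∈ T) ∧
        us.map parikhWord = lv := by
  intro lv
  induction lv with
  | nil => exact fun _ => ⟨[], rfl, by simp, rfl⟩
  | cons y lv ih =>
    intro h
    obtain ⟨u, hu, huy⟩ := h y (List.mem_cons_self)
    obtain ⟨us, hlen, hmem, hmap⟩ := ih (fun z hz => h z (List.mem_cons_of_mem y hz))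
    exact ⟨u :: us, by simp [hlen], fun v hv => (List.mem_cons.1 hv).elim
      (fun hh => hh ▸ hu) (hmem v), by simp [hmap, huy]⟩

noncomputable def build : List σ → (σ → List (List γ)) → List (σ × List γ)
  | [], _ => []
  | a :: w, h => (a, (h a).headI) :: build w (Function.update h a (h a).tail)

lemma build_map_fst (w : List σ) (h : σ → List (List γ)) :
    (build w h).map Prod.fst = w := by
  induction w generalizing h with
  | nil => rfl
  | cons a w ih => simp [build, ih]

lemma update_lengths {w : List σ} {a : σ} {h : σ → List (List γ)}
    (hlen : ∀ b, (h b).length = parikhWord (a :: w) b) :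
    ∀ b, ((Function.update h a (h a).tail) b).length = parikhWord w b := by
  intro b
  by_cases hb : b = a
  · subst hb
    rw [Function.update_self, List.length_tail, hlen b, parikh_cons]
    simp
  · rw [Function.update_of_ne hb, hlen b, parikh_cons]
    simp [Ne.symm hb]

lemma build_mem (w : List σ) (h : σ → List (List γ)) (f : σ → Set (List γ))
    (hlen : ∀ b, (h b).length = parikhWord w b)
    (hmem : ∀ b, ∀ u ∈ h b, u ∈ f b) :
    ∀ p ∈ build w h, p.2 ∈ f p.1 := by
  induction w generalizing h with
  | nil => simp [build]
  | cons a w ih =>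
    have hne : h a ≠ [] := by
      intro hnil
      have := hlen a
      rw [hnil, parikh_cons] at this
      simp at this
    intro p hp
    rcases List.mem_cons.1 hp with rfl | hp
    · obtain ⟨y, t, hy⟩ := List.exists_cons_of_ne_nil hne
      show (h a).headI ∈ f a
      rw [hy, List.headI_cons]
      exact hmem a y (by rw [hy]; exact List.mem_cons_self)
    · refine ih _ (update_lengths hlen) ?_ p hp
      intro b u hu
      by_cases hb : b = a
      · subst hb
        rw [Function.update_self] at hu
        exact hmem b u (List.mem_of_mem_tail hu)
      · rw [Function.update_of_ne hb] at hu
        exact hmem b u hu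

lemma build_parikh (w : List σ) (h : σ → List (List γ))
    (hlen : ∀ b, (h b).length = parikhWord w b) :
    parikhWord (((build w h).map Prod.snd).flatten) =
      ∑ a : σ, ((h a).map parikhWord).sum := by
  induction w generalizing h with
  | nil =>
    have : ∀ a : σ, h a = [] := by
      intro a
      have := hlen a
      rw [parikh_nil] at this
      exact List.length_eq_zero_iff.1 this
    simp [build, parikh_nil, this]
  | cons a w ih =>
    have hne : h a ≠ [] := by
      intro hnil
      have := hlen a
      rw [hnil, parikh_cons] at this
      simp at this
    obtain ⟨y, t, hy⟩ := List.exists_cons_of_ne_nil hne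
    have hhead : (h a).headI = y := by rw [hy]; rfl
    have htail : (h a).tail = t := by rw [hy]; rfl
    rw [show build (a :: w) h = (a, (h a).headI) ::
        build w (Function.update h a (h a).tail) from rfl]
    rw [List.map_cons]
    show parikhWord ((h a).headI ++
        (List.map Prod.snd (build w (Function.update h a (h a).tail))).flatten) = _
    rw [parikh_append, ih _ (update_lengths hlen), hhead]
    have hFun : (fun b => (((Function.update h a (h a).tail) b).map parikhWord).sum) =
        Function.update (fun b => ((h b).map parikhWord).sum) a
          ((t.map parikhWord).sum) := by
      funext b
      by_cases hb : b = a
      · subst hb; rw [Function.update_self, Function.update_self, htail]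
      · rw [Function.update_of_ne hb, Function.update_of_ne hb]
    rw [hFun, Finset.sum_update_of_mem (Finset.mem_univ a),
      Finset.sum_eq_sum_sdiff_singleton_add (Finset.mem_univ a)
        (fun b => ((h b).map parikhWord).sum), hy]
    simp only [List.map_cons, List.sum_cons]
    abel

end SLS2


/-- the substitution of semilinear languages L_a into a semilinear
language L is semilinear. σ(L) is modeled as the set of joins of lists of words
u_i ∈ L_{a_i} indexed along a word a₁⋯a_n ∈ L. -/
theorem semilinear_substitution {σ γ : Type*} [Fintype σ] [Fintype γ]
    (L : Set (List σ)) (f : σ → Set (List γ))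
    (hL : IsSemilinearLanguage L) (hf : ∀ a : σ, IsSemilinearLanguage (f a)) :
    IsSemilinearLanguage
      { u : List γ | ∃ ws : List (σ × List γ),
          (ws.map Prod.fst) ∈ L ∧ (∀ p ∈ ws, p.2 ∈ f p.1) ∧
          u = (ws.map Prod.snd).flatten } := by
  classical
  set S : σ → Set (γ → ℕ) := fun a => parikhWord '' f a with hSdef
  have key : parikhWord '' { u : List γ | ∃ ws : List (σ × List γ),
      (ws.map Prod.fst) ∈ L ∧ (∀ p ∈ ws, p.2 ∈ f p.1) ∧
      u = (ws.map Prod.snd).flatten } =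
      ⋃ x ∈ parikhWord '' L, SLS.bigSum S x := by
    ext y
    constructor
    · rintro ⟨u, ⟨ws, hwsL, hwsmem, rfl⟩, rfl⟩
      refine Set.mem_biUnion ⟨ws.map Prod.fst, hwsL, rfl⟩ ?_
      refine ⟨fun a => ((ws.filter (fun p => p.1 = a)).map (fun p => parikhWord p.2)).sum,
        ?_, ?_⟩
      · intro a _
        refine ⟨(ws.filter (fun p => p.1 = a)).map (fun p => parikhWord p.2), ?_, ?_, rfl⟩
        · rw [List.length_map]
          exact SLS2.length_filter_eq_count ws a
        · intro z hz
          obtain ⟨p, hp, rfl⟩ := List.mem_map.1 hz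
          obtain ⟨hpws, hpa⟩ := List.mem_filter.1 hp
          have hpa' : p.1 = a := of_decide_eq_true hpa
          exact hpa' ▸ ⟨p.2, hwsmem p hpws, rfl⟩
      · rw [SLS2.parikh_join, List.map_map]
        exact (SLS2.sum_filter_eq ws (fun p => parikhWord p.2)).symm
    · intro hy
      obtain ⟨x, ⟨w, hwL, rfl⟩, hx⟩ := Set.mem_iUnion₂.1 hy
      obtain ⟨g, hg, rfl⟩ := hx
      have hdata : ∀ a : σ, ∃ us : List (List γ), us.length = parikhWord w a ∧
          (∀ u ∈ us, u ∈ f a) ∧ (us.map parikhWord).sum = g a := by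
        intro a
        obtain ⟨lv, hlen, hmemv, hsum⟩ := hg a (Finset.mem_univ a)
        obtain ⟨us, hul, hum, hmap⟩ := SLS2.exists_list_of_forall_mem_image hmemv
        exact ⟨us, by rw [hul, hlen], hum, by rw [hmap, ← hsum]⟩
      choose us h1 h2 h3 using hdata
      refine ⟨((SLS2.build w us).map Prod.snd).flatten, ⟨SLS2.build w us, ?_, ?_, rfl⟩, ?_⟩
      · rw [SLS2.build_map_fst]; exact hwL
      · exact SLS2.build_mem w us f h1 h2
      · rw [SLS2.build_parikh w us h1]
        exact Finset.sum_congr rfl fun a _ => h3 a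
  unfold IsSemilinearLanguage
  rw [key]
  obtain ⟨n, Ps, hPlin, hPL⟩ := hL
  rw [hPL, Set.biUnion_iUnion]
  refine SLS.isSemilinearSet_iUnion fun i => ?_
  obtain ⟨v₀, l, v, hv⟩ := hPlin i
  rw [hv]
  exact SLS.semilinear_bigSum_iUnion_linear S (fun a => hf a) v₀ l v
end

section
/- Over the two-letter alphabet Σ = {a, #}, let L = {a¹#a²#⋯#a^k# : k ≥ 1}. Then the complement Σ* − L is a semilinear language. (Together with the non-semilinearity of L, this shows the class of semilinear languages is not closed under complement.) -/
/-- The word a¹#a²#⋯#a^k# over the alphabet Fin 2, where a = 0 and # = 1. -/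
def stairWord (k : ℕ) : List (Fin 2) :=
  ((List.range k).map (fun i => List.replicate (i + 1) (0 : Fin 2) ++ [(1 : Fin 2)])).flatten

lemma stairWord_succ (k : ℕ) :
    stairWord (k + 1) = stairWord k ++ (List.replicate (k + 1) (0 : Fin 2) ++ [(1 : Fin 2)]) := by
  simp [stairWord, List.range_succ]

lemma stairWord_getLast? (k : ℕ) (hk : 1 ≤ k) :
    (stairWord k).getLast? = some (1 : Fin 2) := by
  obtain ⟨k, rfl⟩ := Nat.exists_eq_add_of_le hk
  rw [add_comm, stairWord_succ, ← List.append_assoc, List.getLast?_concat]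

lemma stairWord_mem_zero (k : ℕ) (hk : 1 ≤ k) : (0 : Fin 2) ∈ stairWord k := by
  obtain ⟨k, rfl⟩ := Nat.exists_eq_add_of_le hk
  rw [add_comm, stairWord_succ]
  simp

lemma parikhWord_apply {σ : Type*} [inst : DecidableEq σ] (w : List σ) (a : σ) :
    parikhWord w a = w.count a := by
  unfold parikhWord
  congr 1
  exact congrArg _ (Subsingleton.elim _ _)

/-- the complement of the language {a¹#a²#⋯#a^k# : k ≥ 1} is semilinear. -/
theorem stair_compl_semilinear :
    IsSemilinearLanguage
      ({ w : List (Fin 2) | ∃ k : ℕ, 1 ≤ k ∧ w = stairWord k }ᶜ) := by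
  have himg : parikhWord '' ({ w : List (Fin 2) | ∃ k : ℕ, 1 ≤ k ∧ w = stairWord k }ᶜ)
      = Set.univ := by
    apply Set.eq_univ_of_forall
    intro x
    refine ⟨List.replicate (x 1) (1 : Fin 2) ++ List.replicate (x 0) (0 : Fin 2), ?_, ?_⟩
    · rintro ⟨k, hk, hw⟩
      rcases Nat.eq_zero_or_pos (x 0) with h0 | h0
      · have := stairWord_mem_zero k hk
        rw [← hw] at this
        simp [h0] at this
      · obtain ⟨m, hm⟩ : ∃ m, x 0 = m + 1 := ⟨_, (Nat.succ_pred_eq_of_pos h0).symm⟩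
        have hlast : (List.replicate (x 1) (1 : Fin 2) ++ List.replicate (x 0) (0 : Fin 2)).getLast?
            = some (0 : Fin 2) := by
          rw [hm, List.replicate_succ',
            ← List.append_assoc, List.getLast?_concat]
        rw [hw, stairWord_getLast? k hk] at hlast
        exact absurd (Option.some.inj hlast) (by decide)
    · have h1 : (List.replicate (x 1) (1 : Fin 2)).count 0 = 0 :=
        List.count_eq_zero_of_not_mem (by simp)
      have h2 : (List.replicate (x 0) (0 : Fin 2)).count 1 = 0 :=
        List.count_eq_zero_of_not_mem (by simp)
      funext a
      revert a
      rw [Fin.forall_fin_two]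
      constructor
      · rw [parikhWord_apply, List.count_append, h1, List.count_replicate_self, zero_add]
      · rw [parikhWord_apply, List.count_append, h2, List.count_replicate_self, add_zero]
  rw [IsSemilinearLanguage, himg]
  refine ⟨1, fun _ => Set.univ, fun _ => ?_, (Set.iUnion_const Set.univ).symm⟩
  refine ⟨0, 2, fun j => Pi.single j 1, ?_⟩
  ext x
  simp only [Set.mem_univ, Set.mem_setOf_eq, true_iff]
  refine ⟨x, ?_⟩
  funext a
  rw [Pi.add_apply, Pi.zero_apply, zero_add, Finset.sum_apply]
  have : ∀ j : Fin 2, (x j • Pi.single j 1 : Fin 2 → ℕ) a = if a = j then x j else 0 := by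
    intro j
    by_cases h : a = j <;> simp [Pi.single_apply, h]
  simp only [this]
  fin_cases a <;> simp [Fin.sum_univ_two]
end

section
/- Let a, c, d be three distinct letters and let L ⊆ {a}* be any language that is not semilinear. Then the language L' = c·L·d ∪ d·{a}*·c over the alphabet {a, c, d} is semilinear, but the right quotient L'·{d}⁻¹ = {w : wd ∈ L'} equals c·L and is not semilinear. (Hence the class of semilinear languages is not closed under right quotient.) -/
open Classical

noncomputable def ind {σ : Type*} (b : σ) : σ → ℕ := fun x => if b = x then 1 else 0

lemma parikh_cons {σ : Type*} (b : σ) (w : List σ) :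
    parikhWord (b :: w) = parikhWord w + ind b := by
  funext x
  simp [parikhWord, ind, List.count_cons]

lemma parikh_append {σ : Type*} (u v : List σ) :
    parikhWord (u ++ v) = parikhWord u + parikhWord v := by
  funext x
  simp [parikhWord, List.count_append]

lemma parikh_replicate {σ : Type*} (n : ℕ) (b : σ) :
    parikhWord (List.replicate n b) = n • ind b := by
  funext x
  simp [parikhWord, ind, List.count_replicate]

lemma semilinear_of_translate {α : Type*} (e : α → ℕ) (S : Set (α → ℕ))
    (h : IsSemilinearSet' ((· + e) '' S)) : IsSemilinearSet' S := by
  obtain ⟨n, Qs, hlin, hQ⟩ := h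
  refine ⟨n, fun i => {x | x + e ∈ Qs i}, ?_, ?_⟩
  · intro i
    obtain ⟨v₀, l, v, hv⟩ := hlin i
    have hv₀ : v₀ ∈ Qs i := by
      rw [hv]; exact ⟨0, by simp⟩
    have hmem : v₀ ∈ (· + e) '' S := by
      rw [hQ]; exact Set.mem_iUnion.2 ⟨i, hv₀⟩
    obtain ⟨y, -, hy⟩ := hmem
    refine ⟨y, l, v, ?_⟩
    ext x
    simp only [Set.mem_setOf_eq, hv]
    constructor
    · rintro ⟨cs, hc⟩
      refine ⟨cs, ?_⟩
      rw [← hy] at hc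
      have : x + e = (y + ∑ j, cs j • v j) + e := by
        rw [hc]; ring
      exact add_right_cancel this
    · rintro ⟨cs, hc⟩
      refine ⟨cs, ?_⟩
      rw [hc, ← hy]; ring
  · ext x
    have hinj : Function.Injective (· + e) := fun u v h => add_right_cancel h
    constructor
    · intro hx
      have h1 : x + e ∈ (· + e) '' S := ⟨x, hx, rfl⟩
      rw [hQ] at h1
      obtain ⟨i, hi⟩ := Set.mem_iUnion.1 h1
      exact Set.mem_iUnion.2 ⟨i, hi⟩
    · intro hx
      obtain ⟨i, hi⟩ := Set.mem_iUnion.1 hx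
      have : x + e ∈ ⋃ i, Qs i := Set.mem_iUnion.2 ⟨i, hi⟩
      rw [← hQ] at this
      obtain ⟨u, hu, hux⟩ := this
      rwa [← hinj hux]

/-- for distinct letters a, c, d and any non-semilinear L ⊆ {a}*, the
language L' = c·L·d ∪ d·{a}*·c is semilinear, but the right quotient
L'·{d}⁻¹ = {w : wd ∈ L'} equals c·L and is not semilinear. -/
theorem semilinear_not_closed_right_quotient {σ : Type*} [Fintype σ]
    (a c d : σ) (hac : a ≠ c) (had : a ≠ d) (hcd : c ≠ d)
    (L : Set (List σ)) (hLa : ∀ w ∈ L, ∀ x ∈ w, x = a)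
    (hL : ¬ IsSemilinearLanguage L) :
    IsSemilinearLanguage
      ({ x | ∃ w ∈ L, x = c :: (w ++ [d]) } ∪
       { x | ∃ w : List σ, (∀ y ∈ w, y = a) ∧ x = d :: (w ++ [c]) }) ∧
    { w | w ++ [d] ∈
        ({ x | ∃ w ∈ L, x = c :: (w ++ [d]) } ∪
         { x | ∃ w : List σ, (∀ y ∈ w, y = a) ∧ x = d :: (w ++ [c]) }) }
      = (fun w => c :: w) '' L ∧
    ¬ IsSemilinearLanguage
      { w | w ++ [d] ∈
        ({ x | ∃ w ∈ L, x = c :: (w ++ [d]) } ∪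
         { x | ∃ w : List σ, (∀ y ∈ w, y = a) ∧ x = d :: (w ++ [c]) }) } := by
  have hquot : { w | w ++ [d] ∈
        ({ x | ∃ w ∈ L, x = c :: (w ++ [d]) } ∪
         { x | ∃ w : List σ, (∀ y ∈ w, y = a) ∧ x = d :: (w ++ [c]) }) }
      = (fun w => c :: w) '' L := by
    ext w
    simp only [Set.mem_setOf_eq, Set.mem_union, Set.mem_image]
    constructor
    · rintro (⟨u, hu, heq⟩ | ⟨u, hall, heq⟩)
      · have : w ++ [d] = (c :: u) ++ [d] := by simpa using heq
        exact ⟨u, hu, (List.append_cancel_right this).symm⟩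
      · have h2 : w ++ [d] = (d :: u) ++ [c] := by simpa using heq
        have := (List.append_inj' h2 rfl).2
        simp at this
        exact absurd this hcd.symm
    · rintro ⟨u, hu, rfl⟩
      exact Or.inl ⟨u, hu, by simp⟩
  refine ⟨?_, hquot, ?_⟩
  · -- semilinearity of L'
    refine ⟨1, fun _ => _, fun _ => ⟨ind c + ind d, 1, fun _ => ind a, rfl⟩, ?_⟩
    ext x
    simp only [Set.mem_image, Set.mem_union, Set.mem_setOf_eq, Set.iUnion_const,
      Fin.sum_univ_one]
    constructor
    · rintro ⟨y, (⟨u, hu, rfl⟩ | ⟨u, hall, rfl⟩), rfl⟩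
      · have hrep : u = List.replicate u.length a :=
          List.eq_replicate_iff.2 ⟨rfl, hLa u hu⟩
        refine ⟨fun _ => u.length, ?_⟩
        rw [parikh_cons, parikh_append, hrep, parikh_replicate]
        funext t
        simp [parikhWord, ind, List.count_replicate, List.count_cons, List.count_nil]
        split_ifs <;> omega
      · have hrep : u = List.replicate u.length a :=
          List.eq_replicate_iff.2 ⟨rfl, hall⟩
        refine ⟨fun _ => u.length, ?_⟩
        rw [parikh_cons, parikh_append, hrep, parikh_replicate]
        funext t
        simp [parikhWord, ind, List.count_replicate, List.count_cons, List.count_nil]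
        split_ifs <;> omega
    · rintro ⟨cs, rfl⟩
      refine ⟨d :: (List.replicate (cs 0) a ++ [c]),
        Or.inr ⟨List.replicate (cs 0) a, fun y hy => List.eq_of_mem_replicate hy, rfl⟩, ?_⟩
      rw [parikh_cons, parikh_append, parikh_replicate]
      funext t
      simp [parikhWord, ind, List.count_cons, List.count_nil]
      split_ifs <;> omega
  · -- non-semilinearity of quotient
    rw [hquot]
    intro hsem
    apply hL
    apply semilinear_of_translate (ind c)
    have : (· + ind c) '' (parikhWord '' L) = parikhWord '' ((fun w => c :: w) '' L) := by
      rw [Set.image_image, Set.image_image]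
      apply Set.image_congr
      intro w _
      rw [parikh_cons]
    rw [this]
    exact hsem
end

section
/- Let a, c, d be three distinct letters and let L ⊆ {a}* be any language that is not semilinear. Then the language L' = c·L·d ∪ d·{a}*·c over the alphabet {a, c, d} is semilinear, but the left quotient {c}⁻¹·L' = {w : cw ∈ L'} equals L·d and is not semilinear. (Hence the class of semilinear languages is not closed under left quotient.) -/
noncomputable def unitVec {σ : Type*} (s : σ) : σ → ℕ :=
  open Classical in fun x => if x = s then 1 else 0

open Classical

lemma count_single {σ : Type*} [BEq σ] [LawfulBEq σ] (x s : σ) :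
    List.count x [s] = if x = s then 1 else 0 := by
  rw [List.count_singleton]
  by_cases h : x = s
  · simp [h]
  · simp [h, Ne.symm h]

lemma parikh_all_eq {σ : Type*} (a : σ) (w : List σ) (hw : ∀ y ∈ w, y = a) :
    parikhWord w = w.length • unitVec a := by
  funext x
  simp only [parikhWord, unitVec, Pi.smul_apply, smul_eq_mul]
  by_cases hx : x = a
  · subst hx
    rw [List.count_eq_length.2 fun b hb => (hw b hb).symm]
    simp
  · rw [List.count_eq_zero.2 (fun hmem => hx (hw x hmem))]
    simp [hx]

lemma parikh_sandwich {σ : Type*} (a p q : σ) (hap : a ≠ p) (haq : a ≠ q)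
    (w : List σ) (hw : ∀ y ∈ w, y = a) :
    parikhWord (p :: (w ++ [q])) = unitVec p + unitVec q + w.length • unitVec a := by
  have h := parikh_all_eq a w hw
  funext x
  have hx := congrFun h x
  simp only [parikhWord, unitVec, Pi.add_apply, Pi.smul_apply, smul_eq_mul] at hx ⊢
  rw [show p :: (w ++ [q]) = [p] ++ (w ++ [q]) from rfl, List.count_append,
    List.count_append, count_single, count_single, hx]
  split_ifs <;> first | omega | (exfalso; subst_vars; simp_all)

lemma parikh_snoc {σ : Type*} (w : List σ) (s : σ) :
    parikhWord (w ++ [s]) = parikhWord w + unitVec s := by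
  funext x
  simp only [parikhWord, unitVec, Pi.add_apply]
  rw [List.count_append, count_single]

/-- for distinct letters a, c, d and any non-semilinear L ⊆ {a}*, the
language L' = c·L·d ∪ d·{a}*·c is semilinear, but the left quotient
{c}⁻¹·L' = {w : cw ∈ L'} equals L·d and is not semilinear. -/
theorem semilinear_not_closed_left_quotient {σ : Type*} [Fintype σ]
    (a c d : σ) (hac : a ≠ c) (had : a ≠ d) (hcd : c ≠ d)
    (L : Set (List σ)) (hLa : ∀ w ∈ L, ∀ x ∈ w, x = a)
    (hL : ¬ IsSemilinearLanguage L) :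
    IsSemilinearLanguage
      ({ x | ∃ w ∈ L, x = c :: (w ++ [d]) } ∪
       { x | ∃ w : List σ, (∀ y ∈ w, y = a) ∧ x = d :: (w ++ [c]) }) ∧
    { w | c :: w ∈
        ({ x | ∃ w ∈ L, x = c :: (w ++ [d]) } ∪
         { x | ∃ w : List σ, (∀ y ∈ w, y = a) ∧ x = d :: (w ++ [c]) }) }
      = (fun w => w ++ [d]) '' L ∧
    ¬ IsSemilinearLanguage
      { w | c :: w ∈
        ({ x | ∃ w ∈ L, x = c :: (w ++ [d]) } ∪
         { x | ∃ w : List σ, (∀ y ∈ w, y = a) ∧ x = d :: (w ++ [c]) }) } := by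
  have hquot : { w | c :: w ∈
        ({ x | ∃ w ∈ L, x = c :: (w ++ [d]) } ∪
         { x | ∃ w : List σ, (∀ y ∈ w, y = a) ∧ x = d :: (w ++ [c]) }) }
      = (fun w => w ++ [d]) '' L := by
    ext w
    constructor
    · rintro (⟨w', hw', heq⟩ | ⟨w', _, heq⟩)
      · exact ⟨w', hw', (List.cons.injEq .. ▸ heq).2.symm⟩
      · exact absurd (List.cons.injEq .. ▸ heq).1 hcd
    · rintro ⟨w', hw', rfl⟩
      exact Or.inl ⟨w', hw', rfl⟩
  refine ⟨?_, hquot, ?_⟩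
  · -- Part 1: L' is semilinear
    refine ⟨1, fun _ => {x | ∃ cf : Fin 1 → ℕ, x = (unitVec c + unitVec d)
        + ∑ j, cf j • (fun _ : Fin 1 => unitVec a) j},
      fun _ => ⟨unitVec c + unitVec d, 1, _, rfl⟩, ?_⟩
    rw [Set.iUnion_const]
    ext x
    simp only [Set.mem_image, Set.mem_union, Set.mem_setOf_eq, Fin.sum_univ_one]
    constructor
    · rintro ⟨y, (⟨w, hw, rfl⟩ | ⟨w, hw, rfl⟩), rfl⟩
      · exact ⟨fun _ => w.length, by
          rw [parikh_sandwich a c d hac had w (hLa w hw)]; try ring⟩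
      · exact ⟨fun _ => w.length, by
          rw [parikh_sandwich a d c had hac w hw]; try ring⟩
    · rintro ⟨cf, rfl⟩
      refine ⟨d :: (List.replicate (cf 0) a ++ [c]), Or.inr
        ⟨List.replicate (cf 0) a, fun y hy => List.eq_of_mem_replicate hy, rfl⟩, ?_⟩
      rw [parikh_sandwich a d c had hac _ (fun y hy => List.eq_of_mem_replicate hy),
        List.length_replicate]
      ring
  · -- Part 3
    rw [hquot]
    intro ⟨n, Qs, hlin, hQ⟩
    apply hL
    refine ⟨n, fun i => {x | x + unitVec d ∈ Qs i}, ?_, ?_⟩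
    · intro i
      obtain ⟨v₀, l, v, hv⟩ := hlin i
      have hv₀ : v₀ ∈ Qs i := by
        rw [hv]; exact ⟨fun _ => 0, by simp⟩
      have hv₀' : v₀ ∈ parikhWord '' ((fun w => w ++ [d]) '' L) := by
        have : v₀ ∈ ⋃ i, Qs i := Set.mem_iUnion.2 ⟨i, hv₀⟩
        rwa [← hQ] at this
      obtain ⟨y, ⟨w, hw, rfl⟩, hy⟩ := hv₀'
      simp only at hy
      rw [parikh_snoc] at hy
      refine ⟨parikhWord w, l, v, ?_⟩
      ext x
      simp only [Set.mem_setOf_eq, hv, ← hy]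
      constructor
      · rintro ⟨cf, hcf⟩
        refine ⟨cf, add_right_cancel (b := unitVec d) ?_⟩
        rw [hcf]; ring
      · rintro ⟨cf, rfl⟩
        exact ⟨cf, by ring⟩
    · ext x
      simp only [Set.mem_iUnion, Set.mem_setOf_eq]
      constructor
      · rintro ⟨y, hy, rfl⟩
        have hmem : parikhWord y + unitVec d ∈ ⋃ i, Qs i := by
          rw [← hQ, ← parikh_snoc]
          exact ⟨y ++ [d], ⟨y, hy, rfl⟩, rfl⟩
        obtain ⟨i, hi⟩ := Set.mem_iUnion.1 hmem
        exact ⟨i, hi⟩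
      · rintro ⟨i, hi⟩
        have hmem : x + unitVec d ∈ parikhWord '' ((fun w => w ++ [d]) '' L) := by
          rw [hQ]; exact Set.mem_iUnion.2 ⟨i, hi⟩
        obtain ⟨z, ⟨y, hy, rfl⟩, hz⟩ := hmem
        simp only at hz
        rw [parikh_snoc] at hz
        have : x = parikhWord y := add_right_cancel (b := unitVec d) hz.symm
        exact ⟨y, hy, this.symm⟩
end

section
/- A language L ⊆ Σ* over a finite alphabet Σ is semilinear if and only if there exists a regular language R ⊆ Σ* that is letter-equivalent to L, i.e., ψ(L) = ψ(R). -/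
open Pointwise Computability

section Semilinear
variable {α : Type*} {Q A B X : Set (α → ℕ)}

lemma isLinearSet_singleton (x : α → ℕ) : IsLinearSet' {x} := by
  refine ⟨x, 0, fun _ => 0, ?_⟩
  ext y; simp [eq_comm]

lemma IsLinearSet'.isSemilinearSet (h : IsLinearSet' Q) : IsSemilinearSet' Q :=
  ⟨1, fun _ => Q, fun _ => h, (Set.iUnion_const Q).symm⟩

lemma isSemilinearSet_empty : IsSemilinearSet' (∅ : Set (α → ℕ)) :=
  ⟨0, fun i => i.elim0, fun i => i.elim0, by simp⟩

lemma isSemilinearSet_singleton (x : α → ℕ) : IsSemilinearSet' {x} :=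
  (isLinearSet_singleton x).isSemilinearSet

lemma isSemilinearSet_iUnion {ι : Type*} [Finite ι] (Q : ι → Set (α → ℕ))
    (h : ∀ i, IsSemilinearSet' (Q i)) : IsSemilinearSet' (⋃ i, Q i) := by
  choose n Qs hlin hQ using h
  cases nonempty_fintype ι
  let κ := Σ i : ι, Fin (n i)
  let e := (Fintype.equivFin κ).symm
  refine ⟨Fintype.card κ, fun k => Qs (e k).1 (e k).2, fun k => hlin _ _, ?_⟩
  have : ⋃ k, Qs (e k).1 (e k).2 = ⋃ c : κ, Qs c.1 c.2 :=
    e.surjective.iUnion_comp (fun c => Qs c.1 c.2)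
  rw [this, Set.iUnion_sigma]
  exact Set.iUnion_congr fun i => (hQ i).symm ▸ rfl

lemma IsSemilinearSet'.union (hA : IsSemilinearSet' A) (hB : IsSemilinearSet' B) :
    IsSemilinearSet' (A ∪ B) := by
  rw [Set.union_eq_iUnion]
  exact isSemilinearSet_iUnion _ (fun b => by cases b <;> simpa)

lemma IsLinearSet'.add (hA : IsLinearSet' A) (hB : IsLinearSet' B) : IsLinearSet' (A + B) := by
  obtain ⟨a₀, l, v, rfl⟩ := hA
  obtain ⟨b₀, m, w, rfl⟩ := hB
  refine ⟨a₀ + b₀, l + m, Fin.append v w, ?_⟩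
  ext x
  simp only [Set.mem_add, Set.mem_setOf_eq]
  constructor
  · rintro ⟨-, ⟨c, rfl⟩, -, ⟨d, rfl⟩, rfl⟩
    refine ⟨Fin.append c d, ?_⟩
    rw [Fin.sum_univ_add]
    simp only [Fin.append_left, Fin.append_right]
    abel
  · rintro ⟨c, rfl⟩
    refine ⟨a₀ + ∑ j, c (Fin.castAdd m j) • v j, ⟨_, rfl⟩,
      b₀ + ∑ j, c (Fin.natAdd l j) • w j, ⟨_, rfl⟩, ?_⟩
    rw [Fin.sum_univ_add]
    simp only [Fin.append_left, Fin.append_right]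
    abel

lemma IsSemilinearSet'.add (hA : IsSemilinearSet' A) (hB : IsSemilinearSet' B) :
    IsSemilinearSet' (A + B) := by
  obtain ⟨n, Qs, hQ, rfl⟩ := hA
  obtain ⟨m, Rs, hR, rfl⟩ := hB
  have : (⋃ i, Qs i) + (⋃ j, Rs j) = ⋃ p : Fin n × Fin m, (Qs p.1 + Rs p.2) := by
    ext x
    simp only [Set.mem_add, Set.mem_iUnion]
    constructor
    · rintro ⟨a, ⟨i, ha⟩, b, ⟨j, hb⟩, rfl⟩
      exact ⟨(i, j), a, ha, b, hb, rfl⟩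
    · rintro ⟨⟨i, j⟩, a, ha, b, hb, rfl⟩
      exact ⟨a, ⟨i, ha⟩, b, ⟨j, hb⟩, rfl⟩
  rw [this]
  exact isSemilinearSet_iUnion _ fun p => ((hQ p.1).add (hR p.2)).isSemilinearSet

/-- The set of finite sums of elements of `X`. -/
def starSet (X : Set (α → ℕ)) : Set (α → ℕ) :=
  {x | ∃ l : List (α → ℕ), (∀ v ∈ l, v ∈ X) ∧ l.sum = x}

lemma starSet_empty : starSet (∅ : Set (α → ℕ)) = {0} := by
  ext x
  constructor
  · rintro ⟨l, hl, rfl⟩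
    cases l with
    | nil => rfl
    | cons a l => exact absurd (hl a (by simp)) (by simp)
  · rintro rfl
    exact ⟨[], by simp, rfl⟩

lemma mem_starSet_cons {x y : α → ℕ} (hx : x ∈ X) (hy : y ∈ starSet X) :
    x + y ∈ starSet X := by
  obtain ⟨l, hl, rfl⟩ := hy
  refine ⟨x :: l, ?_, by simp⟩
  intro v hv
  rcases List.mem_cons.mp hv with rfl | hv
  exacts [hx, hl v hv]

lemma starSet_union : starSet (A ∪ B) = starSet A + starSet B := by
  ext x
  constructor
  · rintro ⟨l, hl, rfl⟩
    rw [Set.mem_add]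
    induction l with
    | nil => exact ⟨0, ⟨[], by simp, rfl⟩, 0, ⟨[], by simp, rfl⟩, by simp⟩
    | cons v l ih =>
      obtain ⟨a, ha, b, hb, hab⟩ := ih (fun u hu => hl u (by simp [hu]))
      rcases hl v (by simp) with hv | hv
      · exact ⟨v + a, mem_starSet_cons hv ha, b, hb, by
          rw [List.sum_cons, ← hab]; abel⟩
      · exact ⟨a, ha, v + b, mem_starSet_cons hv hb, by
          rw [List.sum_cons, ← hab]; abel⟩
  · rintro ⟨a, ⟨la, hla, rfl⟩, b, ⟨lb, hlb, rfl⟩, rfl⟩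
    refine ⟨la ++ lb, ?_, by simp⟩
    intro v hv
    rcases List.mem_append.mp hv with h | h
    exacts [Or.inl (hla v h), Or.inr (hlb v h)]

lemma IsLinearSet'.starSet_isSemilinearSet (h : IsLinearSet' Q) : IsSemilinearSet' (starSet Q) := by
  obtain ⟨v₀, l, v, rfl⟩ := h
  have : starSet {x | ∃ c : Fin l → ℕ, x = v₀ + ∑ j, c j • v j} =
      {0} ∪ {x | ∃ c : Fin (l + 1) → ℕ, x = v₀ + ∑ j, c j • Fin.cons v₀ v j} := by
    ext x
    constructor
    · rintro ⟨ls, hls, rfl⟩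
      induction ls with
      | nil => exact Or.inl rfl
      | cons y ls ih =>
        obtain ⟨d, rfl⟩ := hls y (by simp)
        rcases ih (fun u hu => hls u (by simp [hu])) with h0 | ⟨c, hc⟩
        · refine Or.inr ⟨Fin.cons 0 d, ?_⟩
          rw [List.sum_cons, h0, add_zero, Fin.sum_univ_succ]
          simp
        · refine Or.inr ⟨Fin.cons (c 0 + 1) (fun j => d j + c j.succ), ?_⟩
          rw [List.sum_cons, hc, Fin.sum_univ_succ, Fin.sum_univ_succ]
          simp only [Fin.cons_zero, Fin.cons_succ]
          rw [Finset.sum_congr rfl (fun j _ => add_smul (d j) (c j.succ) (v j))]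
          rw [Finset.sum_add_distrib, add_smul, one_smul]
          abel
    · rintro (rfl | ⟨c, rfl⟩)
      · exact ⟨[], by simp, rfl⟩
      · refine ⟨(v₀ + ∑ j, c j.succ • v j) :: List.replicate (c 0) v₀, ?_, ?_⟩
        · intro u hu
          rcases List.mem_cons.mp hu with rfl | hu
          · exact ⟨fun j => c j.succ, rfl⟩
          · rw [List.eq_of_mem_replicate hu]
            exact ⟨0, by simp⟩
        · rw [List.sum_cons, List.sum_replicate, Fin.sum_univ_succ]
          simp only [Fin.cons_zero, Fin.cons_succ]
          abel
  rw [this]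
  exact (isSemilinearSet_singleton 0).union (IsLinearSet'.isSemilinearSet ⟨v₀, l + 1, Fin.cons v₀ v, rfl⟩)

lemma IsSemilinearSet'.starSet_isSemilinearSet (h : IsSemilinearSet' X) :
    IsSemilinearSet' (starSet X) := by
  obtain ⟨n, Qs, hQ, rfl⟩ := h
  induction n with
  | zero => rw [Set.iUnion_of_empty, starSet_empty]; exact isSemilinearSet_singleton 0
  | succ n ih =>
    have : ⋃ i, Qs i = Qs 0 ∪ ⋃ i : Fin n, Qs i.succ := by
      ext x
      simp only [Set.mem_iUnion, Set.mem_union, Fin.exists_fin_succ]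
    rw [this, starSet_union]
    exact ((hQ 0).starSet_isSemilinearSet).add (ih _ (fun i => hQ i.succ))

end Semilinear

section Parikh
variable {σ : Type*}

lemma parikhWord_nil : parikhWord ([] : List σ) = 0 := by
  funext a; simp [parikhWord]

lemma parikhWord_append (u v : List σ) :
    parikhWord (u ++ v) = parikhWord u + parikhWord v := by
  funext a; simp [parikhWord, List.count_append]

lemma parikhWord_flatten (L : List (List σ)) :
    parikhWord L.flatten = (L.map parikhWord).sum := by
  induction L with
  | nil => simp [parikhWord_nil]
  | cons u L ih => simp [parikhWord_append, ih]

lemma image_mul (X Y : Language σ) :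
    parikhWord '' (X * Y) = parikhWord '' X + parikhWord '' Y := by
  ext x
  simp only [Set.mem_image, Set.mem_add, Language.mem_mul]
  constructor
  · rintro ⟨w, ⟨a, ha, b, hb, rfl⟩, rfl⟩
    exact ⟨parikhWord a, ⟨a, ha, rfl⟩, parikhWord b, ⟨b, hb, rfl⟩, (parikhWord_append a b).symm⟩
  · rintro ⟨-, ⟨a, ha, rfl⟩, -, ⟨b, hb, rfl⟩, rfl⟩
    exact ⟨a ++ b, ⟨a, ha, b, hb, rfl⟩, parikhWord_append a b⟩

lemma image_add (X Y : Language σ) :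
    parikhWord '' (X + Y) = parikhWord '' X ∪ parikhWord '' Y := by
  rw [Language.add_def]
  exact Set.image_union _ _ _

lemma image_kstar (X : Language σ) :
    parikhWord '' (X∗ : Language σ) = starSet (parikhWord '' X) := by
  ext x
  simp only [Set.mem_image, Language.mem_kstar, starSet, Set.mem_setOf_eq]
  constructor
  · rintro ⟨w, ⟨L, rfl, hL⟩, rfl⟩
    refine ⟨L.map parikhWord, ?_, (parikhWord_flatten L).symm⟩
    intro v hv
    obtain ⟨y, hy, rfl⟩ := List.mem_map.mp hv
    exact ⟨y, hL y hy, rfl⟩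
  · rintro ⟨l, hl, rfl⟩
    have : ∃ L : List (List σ), (∀ y ∈ L, y ∈ X) ∧ L.map parikhWord = l := by
      induction l with
      | nil => exact ⟨[], by simp, rfl⟩
      | cons v l ih =>
        obtain ⟨L, hL, rfl⟩ := ih (fun u hu => hl u (List.mem_cons_of_mem _ hu))
        obtain ⟨y, hy, rfl⟩ := hl v (List.mem_cons_self)
        exact ⟨y :: L, by
          intro z hz
          rcases List.mem_cons.mp hz with rfl | hz
          exacts [hy, hL z hz], rfl⟩
    obtain ⟨L, hL, rfl⟩ := this
    exact ⟨L.flatten, ⟨L, rfl, hL⟩, parikhWord_flatten L⟩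

/-- canonical word of a vector -/
noncomputable def wordOf [Fintype σ] (v : σ → ℕ) : List σ :=
  Finset.univ.toList.flatMap fun a => List.replicate (v a) a

lemma parikhWord_wordOf [Fintype σ] (v : σ → ℕ) : parikhWord (wordOf v) = v := by
  classical
  funext a
  show (wordOf v).count a = v a
  rw [wordOf, List.count_flatMap]
  have : ∀ b : σ, (Function.comp (List.count a) fun c => List.replicate (v c) c) b
      = if b = a then v a else 0 := by
    intro b
    simp only [Function.comp_apply, List.count_replicate]
    split <;> split <;> simp_all
  calc (List.map (Function.comp (List.count a) fun c => List.replicate (v c) c)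
        Finset.univ.toList).sum
      = (Finset.univ.toList.map fun b => if b = a then v a else 0).sum := by
        rw [List.map_congr_left (fun b _ => this b)]
    _ = ∑ b : σ, if b = a then v a else 0 := Finset.sum_map_toList _ _
    _ = v a := by simp

end Parikh

section Reverse
variable {σ S : Type*} (M : DFA σ S)

/-- `Res M A p q w`: reading `w` from `p` ends at `q`, and all strictly
intermediate states lie in `A`. -/
def Res (A : Set S) : S → S → List σ → Prop
  | p, q, [] => p = q
  | p, q, [a] => M.step p a = q
  | p, q, a :: b :: w => M.step p a ∈ A ∧ Res A (M.step p a) q (b :: w)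

variable {M}

lemma res_nil {A : Set S} {p q : S} : Res M A p q [] ↔ p = q := Iff.rfl

lemma res_single {A : Set S} {p q : S} {a : σ} : Res M A p q [a] ↔ M.step p a = q := Iff.rfl

lemma res_cons {A : Set S} {p q : S} {a : σ} {w : List σ} (h : w ≠ []) :
    Res M A p q (a :: w) ↔ M.step p a ∈ A ∧ Res M A (M.step p a) q w := by
  cases w with
  | nil => exact absurd rfl h
  | cons b t => exact Iff.rfl

lemma res_mono {A B : Set S} (hAB : A ⊆ B) :
    ∀ {w : List σ} {p q : S}, Res M A p q w → Res M B p q w := by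
  intro w
  induction w with
  | nil => exact fun h => h
  | cons a w ih =>
    intro p q h
    cases w with
    | nil => exact h
    | cons b t =>
      obtain ⟨h1, h2⟩ := (res_cons (by simp)).mp h
      exact (res_cons (by simp)).mpr ⟨hAB h1, ih h2⟩

lemma res_univ : ∀ {w : List σ} {p q : S}, Res M Set.univ p q w ↔ M.evalFrom p w = q := by
  intro w
  induction w with
  | nil => exact fun {p q} => Iff.rfl
  | cons a w ih =>
    intro p q
    cases w with
    | nil => exact Iff.rfl
    | cons b t =>
      rw [res_cons (by simp)]
      have : M.evalFrom p (a :: b :: t) = M.evalFrom (M.step p a) (b :: t) := rfl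
      rw [this, ← ih]
      simp [Set.mem_univ]

lemma res_append {A : Set S} {r q : S} {v : List σ} (hr : r ∈ A) (hv : v ≠ []) :
    ∀ {u : List σ} {p : S}, Res M A p r u → Res M A r q v → Res M A p q (u ++ v) := by
  intro u
  induction u with
  | nil => intro p h1 h2; rw [res_nil] at h1; subst h1; exact h2
  | cons a u ih =>
    intro p h1 h2
    cases u with
    | nil =>
      rw [res_single] at h1
      rw [List.nil_append] at *
      exact (res_cons hv).mpr ⟨h1 ▸ hr, h1 ▸ h2⟩
    | cons b t =>
      obtain ⟨ha, h1'⟩ := (res_cons (by simp)).mp h1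
      exact (res_cons (by simp)).mpr ⟨ha, ih h1' h2⟩

lemma res_append' {A : Set S} {r q : S} {v u : List σ} {p : S} (hr : r ∈ A)
    (h1 : Res M A p r u) (h2 : Res M A r q v) : Res M A p q (u ++ v) := by
  rcases eq_or_ne v [] with rfl | hv
  · rw [res_nil] at h2; subst h2; rw [List.append_nil]; exact h1
  · exact res_append hr hv h1 h2

/-- The language of restricted runs. -/
def LRes (M : DFA σ S) (A : Set S) (p q : S) : Language σ := {w | Res M A p q w}

lemma res_insert_decomp {A : Set S} {r q : S} :
    ∀ {w : List σ} {p : S}, Res M (insert r A) p q w →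
      Res M A p q w ∨ ∃ u v, w = u ++ v ∧ u ≠ [] ∧ v ≠ [] ∧
        Res M A p r u ∧ Res M (insert r A) r q v := by
  intro w
  induction w with
  | nil => exact fun h => Or.inl h
  | cons a w ih =>
    intro p h
    cases w with
    | nil => exact Or.inl h
    | cons b t =>
      obtain ⟨ha, h'⟩ := (res_cons (by simp)).mp h
      rcases Set.mem_insert_iff.mp ha with rfl | haA
      · exact Or.inr ⟨[a], b :: t, rfl, by simp, by simp, res_single.mpr rfl, h'⟩
      · rcases ih h' with h'' | ⟨u, v, huv, hu, hv, h1, h2⟩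
        · exact Or.inl ((res_cons (by simp)).mpr ⟨haA, h''⟩)
        · refine Or.inr ⟨a :: u, v, by rw [huv]; rfl, by simp, hv, ?_, h2⟩
          cases u with
          | nil => exact absurd rfl hu
          | cons c s => exact (res_cons (by simp)).mpr ⟨haA, h1⟩

lemma res_insert_star {A : Set S} {r q : S} :
    ∀ (n : ℕ) (w : List σ), w.length ≤ n → Res M (insert r A) r q w →
      w ∈ (LRes M A r r)∗ * LRes M A r q := by
  intro n
  induction n with
  | zero =>
    intro w hw h
    rw [List.length_eq_zero_iff.mp (Nat.le_zero.mp hw)] at h ⊢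
    exact Language.mem_mul.mpr ⟨[], Language.nil_mem_kstar _, [],
      show Res M A r q [] from res_nil.mpr (res_nil.mp h), rfl⟩
  | succ n ih =>
    intro w hw h
    rcases res_insert_decomp h with h' | ⟨u, v, rfl, hu, hv, h1, h2⟩
    · exact Language.mem_mul.mpr ⟨[], Language.nil_mem_kstar _, w, h', rfl⟩
    · have hvn : v.length ≤ n := by
        have := (List.length_append (as := u) (bs := v)) ▸ hw
        have hu1 : 1 ≤ u.length := List.length_pos_iff.mpr hu
        omega
      obtain ⟨x, hx, y, hy, hxy⟩ := Language.mem_mul.mp (ih v hvn h2)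
      obtain ⟨Lx, rfl, hLx⟩ := Language.mem_kstar.mp hx
      refine Language.mem_mul.mpr ⟨u ++ Lx.flatten, ?_, y, hy, ?_⟩
      swap
      · show u ++ Lx.flatten ++ y = u ++ v
        rw [← hxy]; exact List.append_assoc u Lx.flatten y
      refine Language.mem_kstar.mpr ⟨u :: Lx, by simp, ?_⟩
      intro z hz
      rcases List.mem_cons.mp hz with rfl | hz
      exacts [h1, hLx z hz]

lemma lres_insert {A : Set S} {r p q : S} :
    LRes M (insert r A) p q =
      LRes M A p q + LRes M A p r * ((LRes M A r r)∗ * LRes M A r q) := by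
  ext w
  rw [Language.mem_add]
  constructor
  · intro hw
    rcases res_insert_decomp hw with h | ⟨u, v, rfl, hu, hv, h1, h2⟩
    · exact Or.inl h
    · exact Or.inr (Language.mem_mul.mpr
        ⟨u, h1, v, res_insert_star v.length v le_rfl h2, rfl⟩)
  · rintro (h | h)
    · exact res_mono (Set.subset_insert r A) h
    · obtain ⟨u, hu, z, hz, rfl⟩ := Language.mem_mul.mp h
      obtain ⟨x, hx, y, hy, rfl⟩ := Language.mem_mul.mp hz
      obtain ⟨Lx, rfl, hLx⟩ := Language.mem_kstar.mp hx
      have key : ∀ (L : List (List σ)), (∀ z ∈ L, z ∈ LRes M A r r) →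
          Res M (insert r A) r q (L.flatten ++ y) := by
        intro L
        induction L with
        | nil => exact fun _ => res_mono (Set.subset_insert r A) hy
        | cons z L ihL =>
          intro hL
          have : (z :: L).flatten ++ y = z ++ (L.flatten ++ y) := by
            rw [List.flatten_cons, List.append_assoc]
          rw [this]
          exact res_append' (Set.mem_insert r A)
            (res_mono (Set.subset_insert r A) (hL z (by simp)))
            (ihL fun z' hz' => hL z' (by simp [hz']))
      exact res_append' (Set.mem_insert r A)
        (res_mono (Set.subset_insert r A) hu) (key Lx hLx)

lemma res_empty_iff {p q : S} {w : List σ} :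
    Res M (∅ : Set S) p q w ↔ (w = [] ∧ p = q) ∨ ∃ a, w = [a] ∧ M.step p a = q := by
  rcases w with _ | ⟨a, _ | ⟨b, t⟩⟩
  · simp [res_nil]
  · simp [res_single]
  · rw [res_cons (by simp)]
    simp

lemma isSemilinearSet_iUnion_prop {α : Type*} {P : Prop} {Q : Set (α → ℕ)}
    (h : IsSemilinearSet' Q) : IsSemilinearSet' (⋃ (_ : P), Q) := by
  by_cases hP : P
  · simpa [hP] using h
  · simpa [hP] using isSemilinearSet_empty

lemma lres_semilinear [Fintype σ] [Finite S] (A : Finset S) (p q : S) :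
    IsSemilinearSet' (parikhWord '' (LRes M ↑A p q)) := by
  classical
  induction A using Finset.induction_on generalizing p q with
  | empty =>
    have : parikhWord '' (LRes M (↑(∅ : Finset S)) p q) =
        (⋃ (_ : p = q), {parikhWord ([] : List σ)}) ∪
          ⋃ a : σ, ⋃ (_ : M.step p a = q), {parikhWord [a]} := by
      ext x
      simp only [Set.mem_image, Set.mem_union, Set.mem_iUnion, Set.mem_singleton_iff]
      constructor
      · rintro ⟨w, hw, rfl⟩
        rw [Finset.coe_empty] at hw
        rcases res_empty_iff.mp hw with ⟨rfl, rfl⟩ | ⟨a, rfl, ha⟩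
        · exact Or.inl ⟨rfl, rfl⟩
        · exact Or.inr ⟨a, ha, rfl⟩
      · rintro (⟨rfl, rfl⟩ | ⟨a, ha, rfl⟩)
        · refine ⟨[], ?_, rfl⟩
          rw [Finset.coe_empty]
          exact res_empty_iff.mpr (Or.inl ⟨rfl, rfl⟩)
        · refine ⟨[a], ?_, rfl⟩
          rw [Finset.coe_empty]
          exact res_empty_iff.mpr (Or.inr ⟨a, rfl, ha⟩)
    rw [this]
    refine IsSemilinearSet'.union (isSemilinearSet_iUnion_prop (isSemilinearSet_singleton _)) ?_
    exact isSemilinearSet_iUnion _ fun a =>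
      isSemilinearSet_iUnion_prop (isSemilinearSet_singleton _)
  | @insert r A hr ih =>
    rw [Finset.coe_insert, lres_insert, image_add, image_mul, image_mul, image_kstar]
    exact (ih p q).union ((ih p r).add
      (((ih r r).starSet_isSemilinearSet).add (ih r q)))

lemma regular_parikh_semilinear {σ : Type*} [Fintype σ] {L : Language σ}
    (h : L.IsRegular) : IsSemilinearSet' (parikhWord '' L) := by
  obtain ⟨S, fS, M, rfl⟩ := h
  have key : parikhWord '' M.accepts = ⋃ q : S, ⋃ (_ : q ∈ M.accept),
      parikhWord '' (LRes M (↑(Finset.univ : Finset S)) M.start q) := by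
    ext x
    simp only [Set.mem_iUnion, Set.mem_image]
    constructor
    · rintro ⟨w, hw, rfl⟩
      change M.evalFrom M.start w ∈ M.accept at hw
      refine ⟨M.evalFrom M.start w, hw, w, ?_, rfl⟩
      show Res M _ _ _ _
      rw [Finset.coe_univ]
      exact res_univ.mpr rfl
    · rintro ⟨q, hq, w, hw, rfl⟩
      refine ⟨w, ?_, rfl⟩
      change M.evalFrom M.start w ∈ M.accept
      have : M.evalFrom M.start w = q := by
        rw [← res_univ (M := M)]
        have : Res M (↑(Finset.univ : Finset S)) M.start q w := hw
        rwa [Finset.coe_univ] at this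
      show M.evalFrom M.start w ∈ M.accept
      rw [this]; exact hq
  rw [key]
  refine isSemilinearSet_iUnion _ fun q => ?_
  exact isSemilinearSet_iUnion_prop (lres_semilinear _ _ _)

end Reverse

section Forward
variable {σ : Type*}

/-- The language `{u} * {p₁,…,p_l}∗`, described concretely. -/
def LoopLang (u : List σ) {l : ℕ} (ps : Fin l → List σ) : Language σ :=
  {w | ∃ parts : List (List σ), (∀ x ∈ parts, ∃ j, x = ps j) ∧ w = u ++ parts.flatten}

variable (u : List σ) {l : ℕ} (ps : Fin l → List σ)

lemma loopLang_base : u ∈ LoopLang u ps :=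
  ⟨[], by simp, by simp⟩

lemma loopLang_append {w : List σ} (h : w ∈ LoopLang u ps) (j : Fin l) :
    w ++ ps j ∈ LoopLang u ps := by
  obtain ⟨parts, hparts, rfl⟩ := h
  refine ⟨parts ++ [ps j], ?_, by simp⟩
  intro x hx
  rcases List.mem_append.mp hx with hx | hx
  · exact hparts x hx
  · exact ⟨j, by simpa using hx⟩

abbrev LoopState := Fin (u.length + 1) ⊕ (Σ j : Fin l, Fin (ps j).length)

def hub : LoopState u ps := Sum.inl (Fin.last u.length)

def hubStep (a : σ) : Set (LoopState u ps) :=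
  {s | ∃ (j : Fin l) (h1 : 0 < (ps j).length), (ps j).get ⟨0, h1⟩ = a ∧
      ((∃ h2 : 1 < (ps j).length, s = Sum.inr ⟨j, ⟨1, h2⟩⟩) ∨
        ((ps j).length = 1 ∧ s = hub u ps))}

def innerStep (j : Fin l) (k : Fin (ps j).length) (a : σ) : Set (LoopState u ps) :=
  {s | (ps j).get k = a ∧
      ((∃ h2 : (k : ℕ) + 1 < (ps j).length, s = Sum.inr ⟨j, ⟨(k : ℕ) + 1, h2⟩⟩) ∨
        ((k : ℕ) + 1 = (ps j).length ∧ s = hub u ps))}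

def loopNFA : NFA σ (LoopState u ps) where
  step s a :=
    match s with
    | Sum.inl i =>
      if h : (i : ℕ) < u.length then
        {s' | u.get ⟨(i : ℕ), h⟩ = a ∧ s' = Sum.inl ⟨(i : ℕ) + 1, by omega⟩}
      else hubStep u ps a
    | Sum.inr ⟨j, k⟩ => innerStep u ps j k a
  start := {Sum.inl 0}
  accept := {hub u ps}

lemma loopNFA_step_inl {i : Fin (u.length + 1)} (h : (i : ℕ) < u.length) (a : σ) :
    (loopNFA u ps).step (Sum.inl i) a =
      {s' | u.get ⟨(i : ℕ), h⟩ = a ∧ s' = Sum.inl ⟨(i : ℕ) + 1, by omega⟩} := by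
  show (if h : (i : ℕ) < u.length then _ else _) = _
  rw [dif_pos h]

lemma loopNFA_step_hub {i : Fin (u.length + 1)} (h : ¬ (i : ℕ) < u.length) (a : σ) :
    (loopNFA u ps).step (Sum.inl i) a = hubStep u ps a := by
  show (if h : (i : ℕ) < u.length then _ else _) = _
  rw [dif_neg h]

lemma loopNFA_step_inr (j : Fin l) (k : Fin (ps j).length) (a : σ) :
    (loopNFA u ps).step (Sum.inr ⟨j, k⟩) a = innerStep u ps j k a := rfl

-- general NFA helpers
lemma nfa_evalFrom_append {Q : Type*} (M : NFA σ Q) (S : Set Q) (x y : List σ) :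
    M.evalFrom S (x ++ y) = M.evalFrom (M.evalFrom S x) y :=
  List.foldl_append

lemma nfa_evalFrom_cons {Q : Type*} (M : NFA σ Q) (S : Set Q) (a : σ) (w : List σ) :
    M.evalFrom S (a :: w) = M.evalFrom (M.stepSet S a) w := rfl

lemma nfa_stepSet_mono {Q : Type*} (M : NFA σ Q) {S T : Set Q} (h : S ⊆ T) (a : σ) :
    M.stepSet S a ⊆ M.stepSet T a := by
  intro s hs
  rw [NFA.mem_stepSet] at hs ⊢
  obtain ⟨t, ht, hst⟩ := hs
  exact ⟨t, h ht, hst⟩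

lemma nfa_evalFrom_mono {Q : Type*} (M : NFA σ Q) {S T : Set Q} (h : S ⊆ T) :
    ∀ (w : List σ), M.evalFrom S w ⊆ M.evalFrom T w := by
  intro w
  induction w generalizing S T with
  | nil => exact h
  | cons a w ih =>
    rw [nfa_evalFrom_cons, nfa_evalFrom_cons]
    exact ih (nfa_stepSet_mono M h a)

lemma nfa_stepSet_singleton {Q : Type*} (M : NFA σ Q) (q : Q) (a : σ) :
    M.stepSet {q} a = M.step q a := by
  simp [NFA.stepSet]

-- completeness
lemma loop_u : ∀ (v : List σ) (i : Fin (u.length + 1)), u.drop (i : ℕ) = v →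
    hub u ps ∈ (loopNFA u ps).evalFrom {Sum.inl i} v := by
  intro v
  induction v with
  | nil =>
    intro i hv
    have hlen : u.length ≤ (i : ℕ) := by
      by_contra hc
      push_neg at hc
      have := List.drop_eq_nil_iff.mp hv
      omega
    have : i = Fin.last u.length := Fin.ext (by have := i.isLt; simp [Fin.last]; omega)
    rw [this]
    exact rfl
  | cons a v ih =>
    intro i hv
    have hi : (i : ℕ) < u.length := by
      by_contra hc
      rw [List.drop_eq_nil_iff.mpr (by omega)] at hv
      exact absurd hv (by simp)
    have hdrop : u.drop (i : ℕ) = u.get ⟨(i : ℕ), hi⟩ :: u.drop ((i : ℕ) + 1) := by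
      rw [List.get_eq_getElem]
      exact List.drop_eq_getElem_cons hi
    rw [hdrop] at hv
    obtain ⟨ha, hv⟩ := List.cons.injEq _ _ _ _ ▸ hv
    rw [nfa_evalFrom_cons]
    refine nfa_evalFrom_mono _ ?_ v (ih ⟨(i : ℕ) + 1, by omega⟩ hv)
    rw [nfa_stepSet_singleton, loopNFA_step_inl u ps hi]
    intro s hs
    rw [Set.mem_singleton_iff] at hs
    exact ⟨ha, hs⟩

lemma loop_p_aux (j : Fin l) : ∀ (v : List σ) (k : ℕ) (hk : k < (ps j).length),
    (ps j).drop k = v →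
    hub u ps ∈ (loopNFA u ps).evalFrom {Sum.inr ⟨j, ⟨k, hk⟩⟩} v := by
  intro v
  induction v with
  | nil =>
    intro k hk hv
    have := List.drop_eq_nil_iff.mp hv
    omega
  | cons a v ih =>
    intro k hk hv
    have hdrop : (ps j).drop k = (ps j).get ⟨k, hk⟩ :: (ps j).drop (k + 1) := by
      rw [List.get_eq_getElem]
      exact List.drop_eq_getElem_cons hk
    rw [hdrop] at hv
    obtain ⟨ha, hv⟩ := List.cons.injEq _ _ _ _ ▸ hv
    rw [nfa_evalFrom_cons, nfa_stepSet_singleton, loopNFA_step_inr]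
    rcases lt_or_eq_of_le (Nat.succ_le_of_lt hk) with h2 | h2
    · refine nfa_evalFrom_mono _ ?_ v (ih (k + 1) h2 hv)
      intro s hs
      rw [Set.mem_singleton_iff] at hs
      exact ⟨ha, Or.inl ⟨h2, hs⟩⟩
    · have hvnil : v = [] := by
        rw [← hv]
        exact List.drop_eq_nil_iff.mpr (by omega)
      subst hvnil
      exact ⟨ha, Or.inr ⟨by exact h2, rfl⟩⟩

lemma loop_p (j : Fin l) :
    hub u ps ∈ (loopNFA u ps).evalFrom {hub u ps} (ps j) := by
  rcases Nat.eq_zero_or_pos (ps j).length with h0 | hlen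
  · rw [List.length_eq_zero_iff.mp h0]
    exact rfl
  · have hdrop : ps j = (ps j).get ⟨0, hlen⟩ :: (ps j).drop 1 := by
      rw [List.get_eq_getElem]
      conv_lhs => rw [← List.drop_zero (l := ps j)]
      exact List.drop_eq_getElem_cons hlen
    have hhub : ¬ ((Fin.last u.length : Fin (u.length + 1)) : ℕ) < u.length := by
      simp
    conv_lhs => rw [hdrop]
    rw [nfa_evalFrom_cons, nfa_stepSet_singleton]
    rw [show (loopNFA u ps).step (hub u ps) ((ps j).get ⟨0, hlen⟩)
        = hubStep u ps ((ps j).get ⟨0, hlen⟩) from loopNFA_step_hub u ps hhub _]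
    rcases lt_or_eq_of_le (Nat.succ_le_of_lt hlen) with h2 | h2
    · refine nfa_evalFrom_mono _ ?_ _ (loop_p_aux u ps j ((ps j).drop 1) 1 h2 rfl)
      intro s hs
      rw [Set.mem_singleton_iff] at hs
      exact ⟨j, hlen, rfl, Or.inl ⟨h2, hs⟩⟩
    · have : (ps j).drop 1 = [] := List.drop_eq_nil_iff.mpr (by omega)
      rw [this]
      show hub u ps ∈ hubStep u ps _
      exact ⟨j, hlen, rfl, Or.inr ⟨h2.symm, rfl⟩⟩

lemma loop_complete {w : List σ} (hw : w ∈ LoopLang u ps) :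
    hub u ps ∈ (loopNFA u ps).evalFrom {Sum.inl 0} w := by
  obtain ⟨parts, hparts, rfl⟩ := hw
  rw [nfa_evalFrom_append]
  have h1 : hub u ps ∈ (loopNFA u ps).evalFrom {Sum.inl 0} u := by
    apply loop_u u ps u 0
    simp
  have h2 : ∀ (parts : List (List σ)), (∀ x ∈ parts, ∃ j, x = ps j) →
      hub u ps ∈ (loopNFA u ps).evalFrom {hub u ps} parts.flatten := by
    intro parts
    induction parts with
    | nil => exact fun _ => rfl
    | cons x parts ih =>
      intro hp
      rw [List.flatten_cons, nfa_evalFrom_append]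
      refine nfa_evalFrom_mono _ ?_ _ (ih fun y hy => hp y (by simp [hy]))
      intro s hs
      rw [Set.mem_singleton_iff] at hs
      subst hs
      obtain ⟨j, rfl⟩ := hp x (by simp)
      exact loop_p u ps j
  refine nfa_evalFrom_mono _ ?_ _ (h2 parts hparts)
  intro s hs
  rw [Set.mem_singleton_iff] at hs
  subst hs
  exact h1

/-- invariant for soundness -/
def Good (w : List σ) : LoopState u ps → Prop
  | Sum.inl i => if (i : ℕ) = u.length then w ∈ LoopLang u ps else w = u.take (i : ℕ)
  | Sum.inr ⟨j, k⟩ => ∃ w', w' ∈ LoopLang u ps ∧ w = w' ++ (ps j).take (k : ℕ)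

lemma loop_sound : ∀ (w : List σ), ∀ s ∈ (loopNFA u ps).evalFrom {Sum.inl 0} w,
    Good u ps w s := by
  intro w
  induction w using List.reverseRecOn with
  | nil =>
    intro s hs
    rw [NFA.evalFrom_nil, Set.mem_singleton_iff] at hs
    subst hs
    show Good u ps [] (Sum.inl 0)
    simp only [Good]
    rcases Nat.eq_zero_or_pos u.length with h0 | hpos
    · rw [if_pos (by simp [h0])]
      rw [List.length_eq_zero_iff.mp h0]
      exact loopLang_base _ _
    · rw [if_neg (by simp; omega)]
      simp
  | append_singleton w a ih =>
    intro s hs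
    rw [show (loopNFA u ps).evalFrom {Sum.inl 0} (w ++ [a]) = (loopNFA u ps).stepSet ((loopNFA u ps).evalFrom {Sum.inl 0} w) a from by rw [NFA.evalFrom_append]; rfl, NFA.mem_stepSet] at hs
    obtain ⟨t, ht, hstep⟩ := hs
    have hG := ih t ht
    match t with
    | Sum.inl i =>
      by_cases hi : (i : ℕ) < u.length
      · rw [loopNFA_step_inl u ps hi] at hstep
        obtain ⟨ha, rfl⟩ := hstep
        simp only [Good] at hG
        rw [if_neg (by omega)] at hG
        subst hG
        have htake : u.take (i : ℕ) ++ [a] = u.take ((i : ℕ) + 1) := by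
          rw [← ha, List.get_eq_getElem]
          rw [List.take_succ, List.getElem?_eq_getElem hi]
          rfl
        simp only [Good]
        by_cases hend : (i : ℕ) + 1 = u.length
        · rw [if_pos hend]
          rw [htake, hend, List.take_length]
          exact loopLang_base _ _
        · rw [if_neg hend]
          exact htake
      · rw [loopNFA_step_hub u ps hi] at hstep
        simp only [Good] at hG
        rw [if_pos (by have := i.isLt; omega)] at hG
        obtain ⟨j, h1, hget, hcase⟩ := hstep
        rcases hcase with ⟨h2, rfl⟩ | ⟨hl1, rfl⟩
        · refine ⟨w, hG, ?_⟩
          have : (ps j).take 1 = [a] := by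
            rw [← hget, List.get_eq_getElem]
            rw [show (1 : ℕ) = 0 + 1 from rfl, ← List.take_concat_get' _ _ h1]
            simp
          rw [this]
        · simp only [Good, hub, Fin.val_last]
          rw [if_true]
          have hps : ps j = [a] := by
            obtain ⟨b, hb⟩ := List.length_eq_one_iff.mp hl1
            have hba : b = a := by
              rw [← hget]
              simp [hb]
            rw [hb, hba]
          rw [show w ++ [a] = w ++ ps j by rw [hps]]
          exact loopLang_append u ps hG j
    | Sum.inr ⟨j, k⟩ =>
      rw [loopNFA_step_inr] at hstep
      obtain ⟨hget, hcase⟩ := hstep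
      obtain ⟨w', hw', rfl⟩ := hG
      rcases hcase with ⟨h2, rfl⟩ | ⟨h2, rfl⟩
      · refine ⟨w', hw', ?_⟩
        rw [List.append_assoc]
        congr 1
        rw [← hget, List.get_eq_getElem, ← List.take_concat_get' _ _ k.isLt]
      · simp only [Good, hub, Fin.val_last]
        rw [if_true]
        have : (ps j).take ((k : ℕ)) ++ [a] = ps j := by
          rw [← hget, List.get_eq_getElem, List.take_concat_get' _ _ k.isLt, h2,
            List.take_length]
        rw [List.append_assoc, this]
        exact loopLang_append u ps hw' j

lemma loop_accepts : (loopNFA u ps).accepts = LoopLang u ps := by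
  ext w
  rw [NFA.mem_accepts]
  constructor
  · rintro ⟨s, hacc, heval⟩
    rw [show (loopNFA u ps).accept = {hub u ps} from rfl, Set.mem_singleton_iff] at hacc
    subst hacc
    have := loop_sound u ps w _ heval
    simp only [hub, Good] at this
    rwa [if_pos (by simp)] at this
  · intro hw
    exact ⟨hub u ps, rfl, loop_complete u ps hw⟩

end Forward

section SigmaNFA
variable {σ : Type u} {ι : Type*} {St : ι → Type*}

def sigmaNFA (Ms : ∀ i, NFA σ (St i)) : NFA σ (Σ i, St i) where
  step s a := Sigma.mk s.1 '' (Ms s.1).step s.2 a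
  start := ⋃ i, Sigma.mk i '' (Ms i).start
  accept := ⋃ i, Sigma.mk i '' (Ms i).accept

lemma sigmaNFA_stepSet (Ms : ∀ i, NFA σ (St i)) (S : ∀ i, Set (St i)) (a : σ) :
    (sigmaNFA Ms).stepSet (⋃ i, Sigma.mk i '' S i) a
      = ⋃ i, Sigma.mk i '' (Ms i).stepSet (S i) a := by
  ext s
  constructor
  · intro hmem
    rw [NFA.mem_stepSet] at hmem
    obtain ⟨t, ht, hstep⟩ := hmem
    obtain ⟨j, hj⟩ := Set.mem_iUnion.mp ht
    obtain ⟨y, hy, rfl⟩ := (Set.mem_image _ _ _).mp hj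
    obtain ⟨z, hz, hzz⟩ := (Set.mem_image _ _ _).mp hstep
    refine Set.mem_iUnion.mpr ⟨j, (Set.mem_image _ _ _).mpr ⟨z, ?_, hzz⟩⟩
    rw [NFA.mem_stepSet]
    exact ⟨y, hy, hz⟩
  · intro hmem
    obtain ⟨j, hj⟩ := Set.mem_iUnion.mp hmem
    obtain ⟨z, hz, hzz⟩ := (Set.mem_image _ _ _).mp hj
    rw [NFA.mem_stepSet] at hz
    obtain ⟨y, hy, hstep⟩ := hz
    rw [NFA.mem_stepSet]
    exact ⟨⟨j, y⟩, Set.mem_iUnion.mpr ⟨j, (Set.mem_image _ _ _).mpr ⟨y, hy, rfl⟩⟩,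
      (Set.mem_image _ _ _).mpr ⟨z, hstep, hzz⟩⟩

lemma sigmaNFA_evalFrom (Ms : ∀ i, NFA σ (St i)) :
    ∀ (w : List σ) (S : ∀ i, Set (St i)),
    (sigmaNFA Ms).evalFrom (⋃ i, Sigma.mk i '' S i) w
      = ⋃ i, Sigma.mk i '' (Ms i).evalFrom (S i) w := by
  intro w
  induction w with
  | nil => intro S; rfl
  | cons a w ih =>
    intro S
    show (sigmaNFA Ms).evalFrom ((sigmaNFA Ms).stepSet _ a) w = _
    rw [sigmaNFA_stepSet, ih (fun i => (Ms i).stepSet (S i) a)]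
    rfl

lemma sigmaNFA_accepts (Ms : ∀ i, NFA σ (St i)) :
    (sigmaNFA Ms).accepts = ⋃ i, (Ms i).accepts := by
  ext w
  rw [NFA.mem_accepts]
  have hU : (∃ i, w ∈ (Ms i).accepts) ↔ w ∈ (⋃ i, (Ms i).accepts : Set (List σ)) :=
    Set.mem_iUnion.symm
  refine Iff.trans ?_ hU
  have heval : (sigmaNFA Ms).evalFrom (sigmaNFA Ms).start w
      = ⋃ i, Sigma.mk i '' (Ms i).evalFrom (Ms i).start w :=
    sigmaNFA_evalFrom Ms w _
  constructor
  · rintro ⟨s, hacc, hs⟩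
    rw [heval] at hs
    obtain ⟨j, hj⟩ := Set.mem_iUnion.mp hs
    obtain ⟨z, hz, rfl⟩ := (Set.mem_image _ _ _).mp hj
    obtain ⟨j', hj'⟩ := Set.mem_iUnion.mp hacc
    obtain ⟨y, hy, hyy⟩ := (Set.mem_image _ _ _).mp hj'
    obtain ⟨rfl, h⟩ := Sigma.mk.inj_iff.mp hyy
    refine ⟨j', ?_⟩
    rw [NFA.mem_accepts]
    exact ⟨z, eq_of_heq h ▸ hy, hz⟩
  · rintro ⟨j, hj⟩
    rw [NFA.mem_accepts] at hj
    obtain ⟨s, hacc, hs⟩ := hj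
    refine ⟨⟨j, s⟩, Set.mem_iUnion.mpr ⟨j, (Set.mem_image _ _ _).mpr ⟨s, hacc, rfl⟩⟩, ?_⟩
    rw [heval]
    exact Set.mem_iUnion.mpr ⟨j, (Set.mem_image _ _ _).mpr ⟨s, hs, rfl⟩⟩

end SigmaNFA

section Assemble
variable {σ : Type*} [Fintype σ]

lemma loopLang_parikh (v₀ : σ → ℕ) {l : ℕ} (v : Fin l → σ → ℕ) :
    parikhWord '' (LoopLang (wordOf v₀) (fun j => wordOf (v j)) : Language σ) =
      {x | ∃ c : Fin l → ℕ, x = v₀ + ∑ j, c j • v j} := by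
  ext x
  constructor
  · rintro ⟨w, ⟨parts, hparts, rfl⟩, rfl⟩
    have key : ∀ (parts : List (List σ)), (∀ y ∈ parts, ∃ j, y = wordOf (v j)) →
        ∃ c : Fin l → ℕ, (parts.map parikhWord).sum = ∑ j, c j • v j := by
      intro parts
      induction parts with
      | nil => exact fun _ => ⟨0, by simp⟩
      | cons y parts ih =>
        intro hp
        obtain ⟨c, hc⟩ := ih (fun z hz => hp z (by simp [hz]))
        obtain ⟨j₀, rfl⟩ := hp y (by simp)
        refine ⟨fun j => c j + if j = j₀ then 1 else 0, ?_⟩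
        rw [List.map_cons, List.sum_cons, hc, parikhWord_wordOf]
        have hsplit : ∀ j : Fin l, (c j + if j = j₀ then 1 else 0) • v j
            = c j • v j + (if j = j₀ then v j else 0) := by
          intro j
          rw [add_smul]
          congr 1
          split <;> simp
        rw [Finset.sum_congr rfl fun j _ => hsplit j, Finset.sum_add_distrib,
          Finset.sum_ite_eq' Finset.univ j₀ v]
        simp [add_comm]
    obtain ⟨c, hc⟩ := key parts hparts
    refine ⟨c, ?_⟩
    rw [parikhWord_append, parikhWord_flatten, parikhWord_wordOf, hc]
  · rintro ⟨c, rfl⟩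
    refine ⟨wordOf v₀ ++
      (Finset.univ.toList.flatMap fun j => List.replicate (c j) (wordOf (v j))).flatten,
      ⟨_, ?_, rfl⟩, ?_⟩
    · intro y hy
      obtain ⟨j, -, hj⟩ := List.mem_flatMap.mp hy
      exact ⟨j, List.eq_of_mem_replicate hj⟩
    · rw [parikhWord_append, parikhWord_flatten, parikhWord_wordOf]
      congr 1
      rw [List.map_flatMap]
      calc (Finset.univ.toList.flatMap fun j =>
            (List.replicate (c j) (wordOf (v j))).map parikhWord).sum
          = (Finset.univ.toList.map fun j =>
              ((List.replicate (c j) (wordOf (v j))).map parikhWord).sum).sum := by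
            rw [List.flatMap_def, List.sum_flatten, List.map_map]
            rfl
        _ = (Finset.univ.toList.map fun j => c j • v j).sum := by
            congr 1
            refine List.map_congr_left fun j _ => ?_
            rw [List.map_replicate, parikhWord_wordOf, List.sum_replicate]
        _ = ∑ j, c j • v j := Finset.sum_map_toList _ _

lemma semilinear_exists_regular {X : Set (σ → ℕ)} (h : IsSemilinearSet' X) :
    ∃ R : Language σ, R.IsRegular ∧ parikhWord '' (R : Language σ) = X := by
  obtain ⟨n, Qs, hlin, rfl⟩ := h
  choose v₀ lng vv hQ using hlin
  let Ms : ∀ i : Fin n, NFA σ (LoopState (wordOf (v₀ i)) (fun j => wordOf (vv i j))) :=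
    fun i => loopNFA _ _
  refine ⟨(sigmaNFA Ms).accepts, ⟨_, inferInstance, (sigmaNFA Ms).toDFA,
    NFA.toDFA_correct⟩, ?_⟩
  rw [sigmaNFA_accepts, show parikhWord '' ⋃ i, (Ms i).accepts = ⋃ i, parikhWord '' ((Ms i).accepts : Set (List σ)) from Set.image_iUnion]
  refine Set.iUnion_congr fun i => ?_
  show parikhWord '' ((Ms i).accepts : Language σ) = Qs i
  rw [show (Ms i).accepts = LoopLang (wordOf (v₀ i)) (fun j => wordOf (vv i j)) from
    loop_accepts _ _]
  rw [loopLang_parikh, ← hQ i]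

end Assemble

/-- a language L over a finite alphabet is semilinear iff there is a
regular language R letter-equivalent to L, i.e. with the same Parikh image. -/
theorem semilinear_iff_letterEquiv_regular {σ : Type*} [Fintype σ] (L : Language σ) :
    IsSemilinearLanguage L ↔
      ∃ R : Language σ, R.IsRegular ∧ parikhWord '' L = parikhWord '' R := by
  constructor
  · intro h
    have h' : IsSemilinearSet' (parikhWord '' (L : Set (List σ))) := h
    obtain ⟨R, hreg, heq⟩ := semilinear_exists_regular h'
    exact ⟨R, hreg, heq.symm⟩
  · rintro ⟨R, hreg, heq⟩
    show IsSemilinearSet' (parikhWord '' (L : Set (List σ)))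
    rw [heq]
    exact regular_parikh_semilinear hreg
end
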